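/- arXiv:2502.12309 — 5 statements merged into one kernel-verified Lean document; each statement's English description precedes it below -/
import Mathlib

section
/- Let M be a nonnegative irreducible n×n matrix with n ≥ 2 and ρ(M) = 1. For δ ∈ (0,1), let k(δ) be the unique solution of k(δ)^⊤ = δ k(δ)^⊤ M + z^⊤ where z has nonnegative entries summing to 1. Then as δ → 1⁻, the rescaled vector (1−δ)k(δ) converges to a left Perron eigenvector of M (a nonnegative eigenvector with eigenvalue 1). -/
open Matrix Filter Topology
open scoped ENNReal NNReal

attribute [local instance] Matrix.linftyOpNormedRing Matrix.linftyOpNormedAlgebra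
  Matrix.linftyOpNormedAddCommGroup Matrix.linftyOpNormedSpace

/-- Spectral radius of a real matrix: the maximum modulus of its complex eigenvalues. -/
noncomputable def specRad {n : ℕ} (M : Matrix (Fin n) (Fin n) ℝ) : ℝ :=
  sSup {r : ℝ | ∃ μ : ℂ, μ ∈ spectrum ℂ (M.map (algebraMap ℝ ℂ)) ∧ r = ‖μ‖}

/-- A nonnegative matrix is irreducible if its digraph is strongly connected:
for all `i j` there is a walk of positive length with positive weight from `i` to `j`. -/
def MatIrreducible {n : ℕ} (M : Matrix (Fin n) (Fin n) ℝ) : Prop :=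
  ∀ i j, ∃ t : ℕ, 0 < t ∧ 0 < (M ^ t) i j

section PF
variable {n : ℕ} {M : Matrix (Fin n) (Fin n) ℝ}
variable {n : ℕ} {M : Matrix (Fin n) (Fin n) ℝ}

lemma vecMul_apply (x : Fin n → ℝ) (A : Matrix (Fin n) (Fin n) ℝ) (j : Fin n) :
    (x ᵥ* A) j = ∑ i, x i * A i j := by
  simp [Matrix.vecMul, dotProduct]

lemma pow_nonneg_entry (hM : ∀ i j, 0 ≤ M i j) : ∀ t i j, 0 ≤ (M ^ t) i j := by
  intro t
  induction t with
  | zero => intro i j; by_cases h : i = j <;> simp [pow_zero, Matrix.one_apply, h]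
  | succ t ih =>
    intro i j
    rw [pow_succ, Matrix.mul_apply]
    exact Finset.sum_nonneg fun l _ => mul_nonneg (ih i l) (hM l j)

lemma vecMul_mono {A : Matrix (Fin n) (Fin n) ℝ} {x y : Fin n → ℝ}
    (hA : ∀ i j, 0 ≤ A i j) (h : ∀ i, x i ≤ y i) :
    ∀ j, (x ᵥ* A) j ≤ (y ᵥ* A) j := by
  intro j
  rw [vecMul_apply, vecMul_apply]
  exact Finset.sum_le_sum fun i _ => mul_le_mul_of_nonneg_right (h i) (hA i j)

lemma vecMul_nonneg {A : Matrix (Fin n) (Fin n) ℝ} {x : Fin n → ℝ}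
    (hA : ∀ i j, 0 ≤ A i j) (hx : ∀ i, 0 ≤ x i) :
    ∀ j, 0 ≤ (x ᵥ* A) j := by
  intro j
  rw [vecMul_apply]
  exact Finset.sum_nonneg fun i _ => mul_nonneg (hx i) (hA i j)

lemma vecMul_pow_succ (x : Fin n → ℝ) (M : Matrix (Fin n) (Fin n) ℝ) (t : ℕ) :
    x ᵥ* M ^ (t + 1) = (x ᵥ* M) ᵥ* M ^ t := by
  rw [pow_succ']; exact (Matrix.vecMul_vecMul x M (M ^ t)).symm

lemma single_le_vecMul {A : Matrix (Fin n) (Fin n) ℝ} {x : Fin n → ℝ}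
    (hA : ∀ i j, 0 ≤ A i j) (hx : ∀ i, 0 ≤ x i)
    (i j : Fin n) : x i * A i j ≤ (x ᵥ* A) j := by
  rw [vecMul_apply]
  exact Finset.single_le_sum (f := fun i => x i * A i j)
    (fun l _ => mul_nonneg (hx l) (hA l j)) (Finset.mem_univ i)

/-- positivity of eigenvectors of irreducible nonnegative matrices -/
lemma eig_pos (hM : ∀ i j, 0 ≤ M i j) (hirr : MatIrreducible M)
    {x : Fin n → ℝ} (hx : ∀ i, 0 ≤ x i) (hx0 : x ≠ 0) (heig : x ᵥ* M = x) :
    ∀ j, 0 < x j := by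
  obtain ⟨i, hi⟩ : ∃ i, x i ≠ 0 := Function.ne_iff.mp hx0
  have hxi : 0 < x i := (hx i).lt_of_ne (Ne.symm hi)
  have heigt : ∀ t, x ᵥ* M ^ t = x := by
    intro t
    induction t with
    | zero => simp [pow_zero]
    | succ t ih => rw [vecMul_pow_succ, heig, ih]
  intro j
  obtain ⟨t, _, hpos⟩ := hirr i j
  have h1 : x i * (M ^ t) i j ≤ (x ᵥ* M ^ t) j :=
    single_le_vecMul (pow_nonneg_entry hM t) hx i j
  rw [heigt] at h1
  exact lt_of_lt_of_le (mul_pos hxi hpos) h1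

/-- If all complex eigenvalues have modulus ≤ 1, a nonnegative nonzero supersolution
`x ≤ x ᵥ* M` is in fact an eigenvector. -/
lemma supersolution_eq (hM : ∀ i j, 0 ≤ M i j) (hirr : MatIrreducible M)
    (hle1 : ∀ μ ∈ spectrum ℂ (M.map (algebraMap ℝ ℂ)), ‖μ‖ ≤ 1)
    {x : Fin n → ℝ} (hx : ∀ i, 0 ≤ x i) (hx0 : x ≠ 0)
    (hsup : ∀ j, x j ≤ (x ᵥ* M) j) : x ᵥ* M = x := by
  -- setup
  obtain ⟨i0, hi0⟩ : ∃ i, x i ≠ 0 := Function.ne_iff.mp hx0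
  have hxi0 : 0 < x i0 := (hx i0).lt_of_ne (Ne.symm hi0)
  haveI : Nonempty (Fin n) := ⟨i0⟩
  by_contra hne
  set Mc := M.map (algebraMap ℝ ℂ) with hMc
  -- the defect vector
  set s : Fin n → ℝ := x ᵥ* M - x with hs
  have hs_nonneg : ∀ j, 0 ≤ s j := fun j => by simp [hs, hsup j]
  have hs_ne : s ≠ 0 := fun h => hne (by funext j; have := congrFun h j; simp [hs] at this ⊢; linarith)
  obtain ⟨i, hi⟩ : ∃ i, s i ≠ 0 := Function.ne_iff.mp hs_ne
  have hsi : 0 < s i := (hs_nonneg i).lt_of_ne (Ne.symm hi)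
  -- monotone powers
  have hinc : ∀ t j, (x ᵥ* M ^ t) j ≤ (x ᵥ* M ^ (t + 1)) j := by
    intro t j
    rw [vecMul_pow_succ]
    exact vecMul_mono (pow_nonneg_entry hM t) hsup j
  have hmono : ∀ j, Monotone fun t => (x ᵥ* M ^ t) j := fun j =>
    monotone_nat_of_le_succ fun t => hinc t j
  have hbase : ∀ t j, x j ≤ (x ᵥ* M ^ t) j := by
    intro t j
    have := hmono j (Nat.zero_le t)
    simpa using this
  -- strict gain
  set tj : Fin n → ℕ := fun j => (hirr i j).choose with htj
  have htjspec : ∀ j, 0 < (M ^ tj j) i j := fun j => (hirr i j).choose_spec.2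
  set T0 : ℕ := (Finset.univ.sup tj) + 1 with hT0
  have hT0pos : 0 < T0 := Nat.succ_pos _
  set y : Fin n → ℝ := x ᵥ* M ^ T0 with hy
  have hgain : ∀ j, x j < y j := by
    intro j
    have h1 : x j + s i * (M ^ tj j) i j ≤ (x ᵥ* M ^ (tj j + 1)) j := by
      rw [vecMul_pow_succ]
      have hxMs : x ᵥ* M = x + s := by funext l; simp [hs]
      rw [hxMs, Matrix.add_vecMul]
      have h2 := hbase (tj j) j
      have h3 := single_le_vecMul (pow_nonneg_entry hM (tj j)) hs_nonneg i j
      simp only [Pi.add_apply]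
      linarith
    have h4 : (x ᵥ* M ^ (tj j + 1)) j ≤ y j := by
      apply hmono j
      have : tj j ≤ Finset.univ.sup tj := Finset.le_sup (Finset.mem_univ j)
      omega
    have h5 : 0 < s i * (M ^ tj j) i j := mul_pos hsi (htjspec j)
    linarith
  -- uniform gain factor
  set ε : ℝ := Finset.univ.inf' Finset.univ_nonempty (fun j => (y j - x j) / (x j + 1)) with hε
  have hεpos : 0 < ε := by
    rw [hε, Finset.lt_inf'_iff]
    intro j _
    exact div_pos (by linarith [hgain j]) (by linarith [hx j])
  have hgeq : ∀ j, (1 + ε) * x j ≤ y j := by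
    intro j
    have h1 : ε ≤ (y j - x j) / (x j + 1) := Finset.inf'_le _ (Finset.mem_univ j)
    rw [le_div_iff₀ (by linarith [hx j] : (0:ℝ) < x j + 1)] at h1
    nlinarith [hx j, hεpos]
  -- iterate
  have hiter : ∀ m j, (1 + ε) ^ m * x j ≤ (x ᵥ* M ^ (T0 * m)) j := by
    intro m
    induction m with
    | zero => intro j; simp
    | succ m ih =>
      intro j
      have hstep : x ᵥ* M ^ (T0 * (m + 1)) = (x ᵥ* M ^ (T0 * m)) ᵥ* M ^ T0 := by
        rw [Nat.mul_succ, pow_add]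
        exact (Matrix.vecMul_vecMul x _ _).symm
      rw [hstep]
      have h1 : ∀ l, ((1 + ε) ^ m • x) l ≤ (x ᵥ* M ^ (T0 * m)) l := fun l => by
        simpa using ih l
      have h2 := vecMul_mono (pow_nonneg_entry hM T0) h1 j
      have h3 : (((1 + ε) ^ m • x) ᵥ* M ^ T0) j = (1 + ε) ^ m * y j := by
        rw [Matrix.smul_vecMul]; simp [hy]
      rw [h3] at h2
      have h4 : (1 + ε) ^ (m + 1) * x j = (1 + ε) ^ m * ((1 + ε) * x j) := by ring
      rw [h4]
      have h5 : (1 + ε) ^ m * ((1 + ε) * x j) ≤ (1 + ε) ^ m * y j :=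
        mul_le_mul_of_nonneg_left (hgeq j) (pow_nonneg (by linarith) m)
      linarith
  -- norm lower bound
  set X : ℝ := Finset.univ.sup' Finset.univ_nonempty x with hX
  have hXpos : 0 < X := lt_of_lt_of_le hxi0 (Finset.le_sup' x (Finset.mem_univ i0))
  have hxleX : ∀ j, x j ≤ X := fun j => Finset.le_sup' x (Finset.mem_univ j)
  have hentry : ∀ (K : ℕ) (a b : Fin n), (M ^ K) a b ≤ ‖Mc ^ K‖ := by
    intro K a b
    have hmap : Mc ^ K = (M ^ K).map (algebraMap ℝ ℂ) := by
      rw [hMc, ← RingHom.mapMatrix_apply, ← RingHom.mapMatrix_apply, ← map_pow]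
    have h1 : ∑ j, ‖(Mc ^ K) a j‖₊ ≤ ‖Mc ^ K‖₊ := by
      rw [Matrix.linfty_opNNNorm_def]
      exact Finset.le_sup (f := fun i => ∑ j, ‖(Mc ^ K) i j‖₊) (Finset.mem_univ a)
    have h2 : ‖(Mc ^ K) a b‖ ≤ ‖Mc ^ K‖ := by
      have h3 : ‖(Mc ^ K) a b‖₊ ≤ ∑ j, ‖(Mc ^ K) a j‖₊ := by
        refine Finset.single_le_sum (f := fun j => ‖(Mc ^ K) a j‖₊) ?_ (Finset.mem_univ b)
        intro j _
        exact zero_le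
      exact_mod_cast h3.trans h1
    have h4 : ‖(Mc ^ K) a b‖ = (M ^ K) a b := by
      rw [hmap]
      simp only [Matrix.map_apply]
      rw [Complex.coe_algebraMap, Complex.norm_real, Real.norm_eq_abs,
        abs_of_nonneg (pow_nonneg_entry hM K a b)]
    linarith [h2, h4.ge, h4.le]
  have hnormlow : ∀ m : ℕ, (1 + ε) ^ m * x i0 ≤ (n * X) * ‖Mc ^ (T0 * m)‖ := by
    intro m
    have h1 := hiter m i0
    have h2 : (x ᵥ* M ^ (T0 * m)) i0 ≤ ∑ _j : Fin n, X * ‖Mc ^ (T0 * m)‖ := by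
      rw [_root_.vecMul_apply]
      apply Finset.sum_le_sum
      intro j _
      exact mul_le_mul (hxleX j) (hentry _ j i0) (pow_nonneg_entry hM _ j i0) (le_of_lt hXpos)
    simp only [Finset.sum_const, Finset.card_univ, Fintype.card_fin, nsmul_eq_mul] at h2
    calc (1 + ε) ^ m * x i0 ≤ (x ᵥ* M ^ (T0 * m)) i0 := h1
    _ ≤ n * (X * ‖Mc ^ (T0 * m)‖) := h2
    _ = (n * X) * ‖Mc ^ (T0 * m)‖ := by ring
  -- Gelfand's formula contradiction
  haveI : CompleteSpace (Matrix (Fin n) (Fin n) ℂ) :=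
    (inferInstance : CompleteSpace (Fin n → Fin n → ℂ))
  have hn' : (0:ℝ) < n := by exact_mod_cast Fin.pos_iff_nonempty.mpr ‹Nonempty (Fin n)›
  set r := spectralRadius ℂ Mc with hr
  have hrle : r ≤ 1 := by
    rw [hr, spectralRadius]
    refine iSup₂_le fun μ hμ => ?_
    have h := hle1 μ hμ
    rw [← ENNReal.coe_one, ENNReal.coe_le_coe]
    exact_mod_cast h
  set s0 : ℝ := Real.sqrt (1 + ε) with hs0def
  have hs0pos : 0 < s0 := Real.sqrt_pos.mpr (by linarith)
  have hs0gt : 1 < s0 := by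
    nlinarith [Real.sq_sqrt (show (0:ℝ) ≤ 1 + ε by linarith), Real.sqrt_nonneg (1 + ε),
      hεpos]
  have hs0sq : s0 * s0 = 1 + ε := Real.mul_self_sqrt (by linarith)
  set c0 : ℝ := x i0 / (n * X) with hc0def
  have hc0 : 0 < c0 := div_pos hxi0 (mul_pos hn' hXpos)
  have hnorm2 : ∀ m : ℕ, c0 * (1 + ε) ^ m ≤ ‖Mc ^ (T0 * m)‖ := by
    intro m
    rw [hc0def, div_mul_eq_mul_div, div_le_iff₀ (mul_pos hn' hXpos)]
    have := hnormlow m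
    nlinarith [this]
  have hev : ∀ᶠ m : ℕ in atTop, s0 ^ m ≤ ‖Mc ^ (T0 * m)‖ := by
    have h1 : Tendsto (fun m : ℕ => c0 * s0 ^ m) atTop atTop :=
      (tendsto_pow_atTop_atTop_of_one_lt hs0gt).const_mul_atTop hc0
    filter_upwards [h1.eventually_ge_atTop 1] with m hm
    have h2 : s0 ^ m * 1 ≤ s0 ^ m * (c0 * s0 ^ m) :=
      mul_le_mul_of_nonneg_left hm (pow_nonneg hs0pos.le m)
    have h3 : s0 ^ m * (c0 * s0 ^ m) = c0 * (1 + ε) ^ m := by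
      rw [← hs0sq, mul_pow]; ring
    rw [h3] at h2
    rw [mul_one] at h2
    linarith [hnorm2 m]
  set q : ℝ := s0 ^ ((1:ℝ)/T0) with hq
  have hT0R : (0:ℝ) < (T0:ℝ) := by exact_mod_cast hT0pos
  have hqgt : 1 < q := by
    rw [hq, Real.one_lt_rpow_iff_of_pos hs0pos]
    exact Or.inl ⟨hs0gt, by positivity⟩
  have hq0 : 0 ≤ q := by positivity
  have hkey : ∀ᶠ m : ℕ in atTop,
      ENNReal.ofReal q ≤ (‖Mc ^ (T0 * m)‖₊ : ℝ≥0∞) ^ (1 / ((T0 * m : ℕ) : ℝ)) := by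
    filter_upwards [hev, eventually_ge_atTop 1] with m hm hm1
    have hKpos : 0 < T0 * m := Nat.mul_pos hT0pos hm1
    have hKR : ((T0 * m : ℕ) : ℝ) ≠ 0 := by positivity
    have hqK : q ^ (T0 * m) ≤ ‖Mc ^ (T0 * m)‖ := by
      have heq : q ^ (T0 * m) = s0 ^ m := by
        rw [hq, ← Real.rpow_natCast (s0 ^ ((1:ℝ)/T0)) (T0 * m),
          ← Real.rpow_mul hs0pos.le]
        have : (1:ℝ)/T0 * ((T0 * m : ℕ) : ℝ) = (m : ℝ) := by
          push_cast
          field_simp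
        rw [this, Real.rpow_natCast]
      rw [heq]; exact hm
    have h1 : ENNReal.ofReal (q ^ (T0*m)) ≤ ENNReal.ofReal ‖Mc ^ (T0*m)‖ :=
      ENNReal.ofReal_le_ofReal hqK
    rw [ofReal_norm, ENNReal.ofReal_pow hq0] at h1
    calc ENNReal.ofReal q
        = ((ENNReal.ofReal q) ^ (T0*m)) ^ (1 / ((T0 * m : ℕ) : ℝ)) := by
          rw [← ENNReal.rpow_natCast (ENNReal.ofReal q) (T0*m), ← ENNReal.rpow_mul,
            mul_one_div, div_self hKR, ENNReal.rpow_one]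
      _ ≤ (‖Mc ^ (T0*m)‖₊ : ℝ≥0∞) ^ (1 / ((T0 * m : ℕ) : ℝ)) :=
          ENNReal.rpow_le_rpow h1 (by positivity)
  have hTm : Tendsto (fun m : ℕ => T0 * m) atTop atTop :=
    tendsto_atTop_mono (fun m => Nat.le_mul_of_pos_left m hT0pos) tendsto_id
  have hsub : Tendsto (fun m : ℕ => (‖Mc ^ (T0 * m)‖₊ : ℝ≥0∞) ^ (1 / ((T0 * m : ℕ) : ℝ)))
      atTop (𝓝 r) :=
    (spectrum.pow_nnnorm_pow_one_div_tendsto_nhds_spectralRadius Mc).comp hTm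
  have hqr : ENNReal.ofReal q ≤ r := ge_of_tendsto hsub hkey
  have hlt : (1:ℝ≥0∞) < ENNReal.ofReal q := ENNReal.one_lt_ofReal.mpr hqgt
  exact absurd (hqr.trans hrle) (not_le.mpr hlt)
end PF

section PF2
variable {n : ℕ} (M : Matrix (Fin n) (Fin n) ℝ)
variable {n : ℕ} (M : Matrix (Fin n) (Fin n) ℝ)

lemma spec_bounds (hn : 0 < n) (hρ : specRad M = 1) :
    (∀ μ ∈ spectrum ℂ (M.map (algebraMap ℝ ℂ)), ‖μ‖ ≤ 1) ∧
    ∃ μ ∈ spectrum ℂ (M.map (algebraMap ℝ ℂ)), ‖μ‖ = 1 := by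
  haveI : Nonempty (Fin n) := Fin.pos_iff_nonempty.mp hn
  haveI : CompleteSpace (Matrix (Fin n) (Fin n) ℂ) :=
    (inferInstance : CompleteSpace (Fin n → Fin n → ℂ))
  haveI : Nontrivial (Matrix (Fin n) (Fin n) ℂ) := by
    obtain ⟨i⟩ := ‹Nonempty (Fin n)›
    exact ⟨0, 1, fun h => by simpa using congrFun (congrFun h i) i⟩
  set Mc := M.map (algebraMap ℝ ℂ) with hMc
  set S : Set ℝ := {r : ℝ | ∃ μ : ℂ, μ ∈ spectrum ℂ Mc ∧ r = ‖μ‖} with hS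
  have hSim : S = (fun μ : ℂ => ‖μ‖) '' spectrum ℂ Mc := by
    ext r; constructor
    · rintro ⟨μ, hμ, rfl⟩; exact ⟨μ, hμ, rfl⟩
    · rintro ⟨μ, hμ, rfl⟩; exact ⟨μ, hμ, rfl⟩
  have hcomp : IsCompact S := by
    rw [hSim]
    exact (spectrum.isCompact Mc).image continuous_norm
  have hne : S.Nonempty := by
    obtain ⟨μ, hμ⟩ := spectrum.nonempty Mc
    exact ⟨‖μ‖, μ, hμ, rfl⟩
  have hbdd : BddAbove S := hcomp.bddAbove
  have hmem : sSup S ∈ S := hcomp.sSup_mem hne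
  have hsup : sSup S = 1 := hρ
  constructor
  · intro μ hμ
    have : ‖μ‖ ∈ S := ⟨μ, hμ, rfl⟩
    calc ‖μ‖ ≤ sSup S := le_csSup hbdd this
      _ = 1 := hsup
  · rw [hsup] at hmem
    obtain ⟨μ, hμ, h⟩ := hmem
    exact ⟨μ, hμ, h.symm⟩

lemma spectrum_transpose :
    spectrum ℂ ((Mᵀ).map (algebraMap ℝ ℂ)) = spectrum ℂ (M.map (algebraMap ℝ ℂ)) := by
  classical
  ext μ
  simp only [spectrum.mem_iff]
  rw [Matrix.transpose_map]
  constructor <;> intro h <;> intro hu <;> apply h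
  · rw [Matrix.isUnit_iff_isUnit_det] at hu ⊢
    rwa [show algebraMap ℂ (Matrix (Fin n) (Fin n) ℂ) μ - (M.map (algebraMap ℝ ℂ))ᵀ
        = (algebraMap ℂ (Matrix (Fin n) (Fin n) ℂ) μ - M.map (algebraMap ℝ ℂ))ᵀ by
      rw [Matrix.transpose_sub]
      congr 1
      rw [Algebra.algebraMap_eq_smul_one, Matrix.transpose_smul, Matrix.transpose_one], Matrix.det_transpose]
  · rw [Matrix.isUnit_iff_isUnit_det] at hu ⊢
    rwa [show algebraMap ℂ (Matrix (Fin n) (Fin n) ℂ) μ - M.map (algebraMap ℝ ℂ)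
        = (algebraMap ℂ (Matrix (Fin n) (Fin n) ℂ) μ - (M.map (algebraMap ℝ ℂ))ᵀ)ᵀ by
      rw [Matrix.transpose_sub, Matrix.transpose_transpose]
      congr 1
      rw [Algebra.algebraMap_eq_smul_one, Matrix.transpose_smul, Matrix.transpose_one], Matrix.det_transpose]

/-- From a modulus-one eigenvalue, get a nonneg "supersolution". -/
lemma exists_supersolution
    (hM : ∀ i j, 0 ≤ M i j)
    (hex : ∃ μ ∈ spectrum ℂ (M.map (algebraMap ℝ ℂ)), ‖μ‖ = 1) :
    ∃ x : Fin n → ℝ, (∀ i, 0 ≤ x i) ∧ x ≠ 0 ∧ ∀ j, x j ≤ (x ᵥ* M) j := by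
  classical
  obtain ⟨μ, hμ, habs⟩ := hex
  set Mc := M.map (algebraMap ℝ ℂ) with hMc
  have hdet : (algebraMap ℂ (Matrix (Fin n) (Fin n) ℂ) μ - Mc).det = 0 := by
    by_contra h
    exact (spectrum.mem_iff.mp hμ)
      ((Matrix.isUnit_iff_isUnit_det _).mpr (isUnit_iff_ne_zero.mpr h))
  have hdetT : (algebraMap ℂ (Matrix (Fin n) (Fin n) ℂ) μ - Mcᵀ).det = 0 := by
    rw [show algebraMap ℂ (Matrix (Fin n) (Fin n) ℂ) μ - Mcᵀ
        = (algebraMap ℂ (Matrix (Fin n) (Fin n) ℂ) μ - Mc)ᵀ by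
      rw [Matrix.transpose_sub]
      congr 1
      rw [Algebra.algebraMap_eq_smul_one, Matrix.transpose_smul, Matrix.transpose_one], Matrix.det_transpose]
    exact hdet
  obtain ⟨v, hv0, hveq⟩ := (Matrix.exists_mulVec_eq_zero_iff).mpr hdetT
  have heig : v ᵥ* Mc = μ • v := by
    have h1 : (algebraMap ℂ (Matrix (Fin n) (Fin n) ℂ) μ) *ᵥ v - Mcᵀ *ᵥ v = 0 := by
      rw [← Matrix.sub_mulVec]; exact hveq
    have h2 : (algebraMap ℂ (Matrix (Fin n) (Fin n) ℂ) μ) *ᵥ v = μ • v := by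
      rw [Algebra.algebraMap_eq_smul_one, Matrix.smul_mulVec, Matrix.one_mulVec]
    rw [← Matrix.mulVec_transpose]
    rw [h2] at h1
    have := sub_eq_zero.mp h1
    exact this.symm
  refine ⟨fun i => ‖v i‖, fun i => norm_nonneg _, ?_, ?_⟩
  · obtain ⟨i, hi⟩ := Function.ne_iff.mp hv0
    intro h
    exact hi (norm_eq_zero.mp (congrFun h i))
  · intro j
    have h2 : ‖v j‖ = ‖(v ᵥ* Mc) j‖ := by
      rw [heig]
      simp [Pi.smul_apply, smul_eq_mul, norm_mul, habs]
    have h3 : (v ᵥ* Mc) j = ∑ i, v i * Mc i j := by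
      simp [Matrix.vecMul, dotProduct]
    have h4 : ‖∑ i, v i * Mc i j‖ ≤ ∑ i, ‖v i‖ * M i j := by
      refine (norm_sum_le _ _).trans (Finset.sum_le_sum fun i _ => ?_)
      rw [norm_mul]
      apply mul_le_mul_of_nonneg_left _ (norm_nonneg _)
      have hmc : Mc i j = ((M i j : ℝ) : ℂ) := rfl
      rw [hmc, Complex.norm_real, Real.norm_eq_abs, abs_of_nonneg (hM i j)]
    have h5 : ((fun i => ‖v i‖) ᵥ* M) j = ∑ i, ‖v i‖ * M i j := by
      simp [Matrix.vecMul, dotProduct]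
    show ‖v j‖ ≤ ((fun i => ‖v i‖) ᵥ* M) j
    rw [h5, h2, h3]
    exact h4
end PF2

lemma unique_eig {n : ℕ} {M : Matrix (Fin n) (Fin n) ℝ} (hn : 0 < n)
    (hM : ∀ i j, 0 ≤ M i j) (hirr : MatIrreducible M)
    {x y : Fin n → ℝ} (hx : ∀ i, 0 ≤ x i) (hx0 : x ≠ 0) (hex : x ᵥ* M = x)
    (hy : ∀ i, 0 ≤ y i) (hy0 : y ≠ 0) (hey : y ᵥ* M = y) :
    ∃ a : ℝ, 0 < a ∧ y = a • x := by
  haveI : Nonempty (Fin n) := Fin.pos_iff_nonempty.mp hn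
  have hxp := eig_pos hM hirr hx hx0 hex
  have hyp := eig_pos hM hirr hy hy0 hey
  obtain ⟨j0, -, hj0⟩ := Finset.exists_min_image Finset.univ (fun j => y j / x j)
    ⟨Classical.arbitrary _, Finset.mem_univ _⟩
  set a := y j0 / x j0 with ha
  have hapos : 0 < a := div_pos (hyp j0) (hxp j0)
  have hd : ∀ j, 0 ≤ y j - a * x j := by
    intro j
    have := hj0 j (Finset.mem_univ j)
    rw [div_le_div_iff₀ (hxp j0) (hxp j)] at this
    rw [ha, sub_nonneg, div_mul_eq_mul_div, div_le_iff₀ (hxp j0)]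
    linarith
  have hdeig : (y - a • x) ᵥ* M = y - a • x := by
    rw [Matrix.sub_vecMul, Matrix.smul_vecMul, hex, hey]
  have hdz : y - a • x = 0 := by
    by_contra hne
    have := eig_pos hM hirr (fun i => by simpa using hd i) hne hdeig j0
    simp only [Pi.sub_apply, Pi.smul_apply, smul_eq_mul] at this
    rw [ha, div_mul_cancel₀ _ (hxp j0).ne', sub_self] at this
    exact lt_irrefl _ this
  exact ⟨a, hapos, sub_eq_zero.mp hdz⟩


theorem stmt_4 (n : ℕ) (hn : 2 ≤ n) (M : Matrix (Fin n) (Fin n) ℝ)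
    (hnonneg : ∀ i j, 0 ≤ M i j)
    (hirr : MatIrreducible M)
    (hρ : specRad M = 1)
    (z : Fin n → ℝ) (hz_nonneg : ∀ i, 0 ≤ z i) (hz_sum : ∑ i, z i = 1)
    (k : ℝ → (Fin n → ℝ))
    (hk : ∀ δ ∈ Set.Ioo (0 : ℝ) 1, k δ = δ • Matrix.vecMul (k δ) M + z) :
    ∃ c : Fin n → ℝ,
      (∀ i, 0 ≤ c i) ∧ c ≠ 0 ∧ Matrix.vecMul c M = c ∧
      Tendsto (fun δ : ℝ => (1 - δ) • k δ) (𝓝[<] 1) (𝓝 c) := by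
  classical
  have hn0 : 0 < n := by omega
  haveI : Nonempty (Fin n) := Fin.pos_iff_nonempty.mp hn0
  obtain ⟨hle1, hex⟩ := spec_bounds M hn0 hρ
  -- left Perron eigenvector
  obtain ⟨x, hxnn, hx0, hxsup⟩ := exists_supersolution M hnonneg hex
  have hxeig : x ᵥ* M = x := supersolution_eq hnonneg hirr hle1 hxnn hx0 hxsup
  have hxpos : ∀ j, 0 < x j := eig_pos hnonneg hirr hxnn hx0 hxeig
  -- right Perron eigenvector via transpose
  have hirrT : MatIrreducible Mᵀ := by
    intro i j
    obtain ⟨t, ht, hpos⟩ := hirr j i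
    refine ⟨t, ht, ?_⟩
    rw [← Matrix.transpose_pow]
    exact hpos
  have hnonnegT : ∀ i j, 0 ≤ Mᵀ i j := fun i j => hnonneg j i
  have hle1T : ∀ μ ∈ spectrum ℂ ((Mᵀ).map (algebraMap ℝ ℂ)), ‖μ‖ ≤ 1 := by
    rw [spectrum_transpose]; exact hle1
  have hexT : ∃ μ ∈ spectrum ℂ ((Mᵀ).map (algebraMap ℝ ℂ)), ‖μ‖ = 1 := by
    rw [spectrum_transpose]; exact hex
  obtain ⟨w, hwnn, hw0, hwsup⟩ := exists_supersolution Mᵀ hnonnegT hexT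
  have hweigT : w ᵥ* Mᵀ = w := supersolution_eq hnonnegT hirrT hle1T hwnn hw0 hwsup
  have hwpos : ∀ j, 0 < w j := eig_pos hnonnegT hirrT hwnn hw0 hweigT
  have hMw : M *ᵥ w = w := by rwa [Matrix.vecMul_transpose] at hweigT
  have hMtw : ∀ t, (M ^ t) *ᵥ w = w := by
    intro t
    induction t with
    | zero => simp
    | succ t ih => rw [pow_succ', ← Matrix.mulVec_mulVec, ih, hMw]
  have hpowb : ∀ (t : ℕ) i j, (M ^ t) i j * w j ≤ w i := by
    intro t i j
    have h1 : ∑ l, (M ^ t) i l * w l = w i := by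
      have := congrFun (hMtw t) i
      simpa [Matrix.mulVec, dotProduct] using this
    rw [← h1]
    exact Finset.single_le_sum (f := fun l => (M ^ t) i l * w l)
      (fun l _ => mul_nonneg (pow_nonneg_entry hnonneg t i l) (hwpos l).le)
      (Finset.mem_univ j)
  -- positivity of weights
  have hzw : 0 < z ⬝ᵥ w := by
    obtain ⟨i, hi⟩ : ∃ i, 0 < z i := by
      by_contra h
      push_neg at h
      have hz0 : ∀ i, z i = 0 := fun i => le_antisymm (h i) (hz_nonneg i)
      rw [Finset.sum_congr rfl (fun i _ => hz0 i)] at hz_sum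
      simp at hz_sum
    have h2 : z i * w i ≤ z ⬝ᵥ w :=
      Finset.single_le_sum (f := fun l => z l * w l)
        (fun l _ => mul_nonneg (hz_nonneg l) (hwpos l).le) (Finset.mem_univ i)
    calc (0:ℝ) < z i * w i := mul_pos hi (hwpos i)
      _ ≤ _ := h2
  have hxw : 0 < x ⬝ᵥ w := by
    set i := Classical.arbitrary (Fin n)
    have h2 : x i * w i ≤ x ⬝ᵥ w :=
      Finset.single_le_sum (f := fun l => x l * w l)
        (fun l _ => mul_nonneg (hxnn l) (hwpos l).le) (Finset.mem_univ i)
    calc (0:ℝ) < x i * w i := mul_pos (hxpos i) (hwpos i)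
      _ ≤ _ := h2
  -- the normalized eigenvector
  set a : ℝ := (z ⬝ᵥ w) / (x ⬝ᵥ w) with ha
  have hapos : 0 < a := div_pos hzw hxw
  set c : Fin n → ℝ := a • x with hc
  have hcnn : ∀ i, 0 ≤ c i := fun i => mul_nonneg hapos.le (hxnn i)
  have hcpos : ∀ i, 0 < c i := fun i => mul_pos hapos (hxpos i)
  have hcne : c ≠ 0 := by
    intro h
    have := congrFun h (Classical.arbitrary (Fin n))
    exact absurd this (hcpos _).ne'
  have hceig : c ᵥ* M = c := by rw [hc, Matrix.smul_vecMul, hxeig]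
  have hcw : c ⬝ᵥ w = z ⬝ᵥ w := by
    rw [hc, smul_dotProduct, ha, smul_eq_mul, div_mul_cancel₀ _ hxw.ne']
  refine ⟨c, hcnn, hcne, hceig, ?_⟩
  -- convergence
  set f : ℝ → (Fin n → ℝ) := fun δ => (1 - δ) • k δ with hf
  show Tendsto f (𝓝[<] (1:ℝ)) (𝓝 c)
  set l : Filter ℝ := 𝓝[<] (1:ℝ) with hl
  have hIoo : Set.Ioo (0:ℝ) 1 ∈ l := Ioo_mem_nhdsLT_of_mem (by norm_num)
  -- nonnegativity of k δ
  have hknn : ∀ δ ∈ Set.Ioo (0:ℝ) 1, ∀ j, 0 ≤ k δ j := by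
    rintro δ hδ j
    obtain ⟨hδ0, hδ1⟩ := hδ
    have hkrec := hk δ ⟨hδ0, hδ1⟩
    have hrep : ∀ t : ℕ, ∃ u : Fin n → ℝ, (∀ j, 0 ≤ u j) ∧
        k δ = δ ^ t • (k δ ᵥ* M ^ t) + u := by
      intro t
      induction t with
      | zero => exact ⟨0, fun j => le_refl 0, by simp⟩
      | succ t ih =>
        obtain ⟨u, hu, hrepu⟩ := ih
        have h1 : k δ ᵥ* M ^ t = δ • (k δ ᵥ* M ^ (t+1)) + z ᵥ* M ^ t := by
          conv_lhs => rw [hkrec]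
          rw [Matrix.add_vecMul, Matrix.smul_vecMul, Matrix.vecMul_vecMul, ← pow_succ']
        refine ⟨δ ^ t • (z ᵥ* M ^ t) + u, ?_, ?_⟩
        · intro j
          have h2 := vecMul_nonneg (pow_nonneg_entry hnonneg t) hz_nonneg j
          have h3 := hu j
          simp only [Pi.add_apply, Pi.smul_apply, smul_eq_mul]
          have := mul_nonneg (pow_nonneg hδ0.le t) h2
          linarith
        · calc k δ = δ ^ t • (k δ ᵥ* M ^ t) + u := hrepu
            _ = δ ^ t • (δ • (k δ ᵥ* M ^ (t+1)) + z ᵥ* M ^ t) + u := by rw [h1]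
            _ = δ ^ (t+1) • (k δ ᵥ* M ^ (t+1)) + (δ ^ t • (z ᵥ* M ^ t) + u) := by
                funext j
                simp only [Pi.add_apply, Pi.smul_apply, smul_eq_mul]
                ring
    set C : ℝ := (∑ i, |k δ i| * w i) / w j with hC
    have hb : ∀ t : ℕ, -(δ ^ t * C) ≤ k δ j := by
      intro t
      obtain ⟨u, hu, hrepu⟩ := hrep t
      have h1 : |(k δ ᵥ* M ^ t) j| ≤ C := by
        rw [_root_.vecMul_apply]
        calc |∑ i, k δ i * (M ^ t) i j| ≤ ∑ i, |k δ i * (M ^ t) i j| :=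
              Finset.abs_sum_le_sum_abs _ _
          _ ≤ ∑ i, |k δ i| * (w i / w j) := by
              refine Finset.sum_le_sum fun i _ => ?_
              rw [abs_mul, abs_of_nonneg (pow_nonneg_entry hnonneg t i j)]
              refine mul_le_mul_of_nonneg_left ?_ (abs_nonneg _)
              rw [le_div_iff₀ (hwpos j)]
              exact hpowb t i j
          _ = C := by
              rw [hC, Finset.sum_div]
              exact Finset.sum_congr rfl fun i _ => (mul_div_assoc _ _ _).symm
      have h2 : k δ j = δ ^ t * (k δ ᵥ* M ^ t) j + u j := by
        have := congrFun hrepu j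
        simpa using this
      have h3 : -(C) ≤ (k δ ᵥ* M ^ t) j := neg_le_of_abs_le h1
      have h4 : 0 ≤ u j := hu j
      have h5 : δ ^ t * (-C) ≤ δ ^ t * (k δ ᵥ* M ^ t) j :=
        mul_le_mul_of_nonneg_left h3 (pow_nonneg hδ0.le t)
      rw [h2]
      rw [mul_neg] at h5
      linarith
    have h2 : Tendsto (fun t : ℕ => -(δ ^ t * C)) atTop (𝓝 0) := by
      have h3 := (tendsto_pow_atTop_nhds_zero_of_lt_one hδ0.le hδ1).mul_const C
      simpa using h3.neg
    exact le_of_tendsto h2 (Filter.Eventually.of_forall hb)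
  -- dot product identity
  have hfw : ∀ δ ∈ Set.Ioo (0:ℝ) 1, f δ ⬝ᵥ w = z ⬝ᵥ w := by
    rintro δ hδ
    have h1 : k δ ⬝ᵥ w = δ * (k δ ⬝ᵥ w) + z ⬝ᵥ w := by
      conv_lhs => rw [hk δ hδ]
      rw [add_dotProduct, smul_dotProduct, smul_eq_mul]
      congr 2
      rw [← Matrix.dotProduct_mulVec, hMw]
    have h2 : f δ ⬝ᵥ w = (1 - δ) * (k δ ⬝ᵥ w) := by
      rw [hf]; simp only [smul_dotProduct, smul_eq_mul]
    rw [h2]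
    linarith
  -- the compact set
  set B : Fin n → ℝ := fun i => (z ⬝ᵥ w) / w i with hB
  set K : Set (Fin n → ℝ) := {y | (∀ j, 0 ≤ y j) ∧ y ⬝ᵥ w = z ⬝ᵥ w} with hK
  have hKbound : ∀ y ∈ K, ∀ i, y i ≤ B i := by
    rintro y ⟨hynn, hyw⟩ i
    rw [hB, le_div_iff₀ (hwpos i)]
    rw [← hyw]
    exact Finset.single_le_sum (f := fun l => y l * w l)
      (fun l _ => mul_nonneg (hynn l) (hwpos l).le) (Finset.mem_univ i)
  have hdotcont : Continuous fun y : Fin n → ℝ => y ⬝ᵥ w := by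
    have : (fun y : Fin n → ℝ => y ⬝ᵥ w) = fun y => ∑ i, y i * w i := rfl
    rw [this]
    exact continuous_finset_sum _ fun i _ => (continuous_apply i).mul continuous_const
  have hKclosed : IsClosed K := by
    have : K = (⋂ j, {y : Fin n → ℝ | 0 ≤ y j}) ∩ {y | y ⬝ᵥ w = z ⬝ᵥ w} := by
      ext y; simp [hK, Set.mem_iInter]
    rw [this]
    exact IsClosed.inter
      (isClosed_iInter fun j => isClosed_le continuous_const (continuous_apply j))
      (isClosed_eq hdotcont continuous_const)
  have hKcomp : IsCompact K := by
    refine IsCompact.of_isClosed_subset (isCompact_Icc (a := (0 : Fin n → ℝ)) (b := B))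
      hKclosed ?_
    rintro y hy
    constructor
    · intro i; exact hy.1 i
    · intro i; exact hKbound y hy i
  have hfK : ∀ᶠ δ in l, f δ ∈ K := by
    filter_upwards [hIoo] with δ hδ
    refine ⟨fun j => ?_, hfw δ hδ⟩
    have := hknn δ hδ j
    have h1 : 0 ≤ 1 - δ := by linarith [hδ.2]
    simpa [hf] using mul_nonneg h1 this
  -- the defect map tends to zero
  have hvecMulcont : Continuous fun y : Fin n → ℝ => y ᵥ* M := by
    refine continuous_pi fun j => ?_
    have : (fun y : Fin n → ℝ => (y ᵥ* M) j) = fun y => ∑ i, y i * M i j := by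
      funext y; exact _root_.vecMul_apply y M j
    rw [this]
    exact continuous_finset_sum _ fun i _ => (continuous_apply i).mul continuous_const
  have hPhicont : Continuous fun y : Fin n → ℝ => y - y ᵥ* M :=
    continuous_id.sub hvecMulcont
  have hPhif : Tendsto (fun δ => f δ - f δ ᵥ* M) l (𝓝 0) := by
    rw [show (0 : Fin n → ℝ) = fun _ => (0:ℝ) from rfl, tendsto_pi_nhds]
    intro j
    set Cj : ℝ := |z j| + ∑ i, B i * M i j with hCj
    have hCjnn : 0 ≤ ∑ i, B i * M i j := Finset.sum_nonneg fun i _ =>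
      mul_nonneg (div_nonneg hzw.le (hwpos i).le) (hnonneg i j)
    refine squeeze_zero_norm' (a := fun δ => (1 - δ) * Cj) ?_ ?_
    · filter_upwards [hIoo] with δ hδ
      obtain ⟨hδ0, hδ1⟩ := hδ
      -- identity
      have hkrec := hk δ ⟨hδ0, hδ1⟩
      have hident : (f δ - f δ ᵥ* M) j = (1 - δ) * (z j - (f δ ᵥ* M) j) := by
        have e1 : f δ ᵥ* M = (1 - δ) • (k δ ᵥ* M) := by
          rw [hf, Matrix.smul_vecMul]
        have e2 : f δ j = (1 - δ) * (δ * (k δ ᵥ* M) j + z j) := by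
          rw [hf]
          simp only [Pi.smul_apply, smul_eq_mul]
          congr 1
          have := congrFun hkrec j
          simpa using this
        simp only [Pi.sub_apply, e2, e1, Pi.smul_apply, smul_eq_mul]
        ring
      rw [hident]
      -- bounds
      have hfKδ : f δ ∈ K := ⟨fun j' => by
          simpa [hf] using mul_nonneg (by linarith : (0:ℝ) ≤ 1 - δ) (hknn δ ⟨hδ0, hδ1⟩ j'),
        hfw δ ⟨hδ0, hδ1⟩⟩
      have hbound : 0 ≤ (f δ ᵥ* M) j ∧ (f δ ᵥ* M) j ≤ ∑ i, B i * M i j := by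
        constructor
        · exact vecMul_nonneg hnonneg (fun i => hfKδ.1 i) j
        · rw [_root_.vecMul_apply]
          exact Finset.sum_le_sum fun i _ =>
            mul_le_mul_of_nonneg_right (hKbound _ hfKδ i) (hnonneg i j)
      have habs : |z j - (f δ ᵥ* M) j| ≤ Cj := by
        rw [abs_le]
        constructor
        · rw [hCj]
          have := abs_nonneg (z j)
          have h1 := hbound.2
          have h2 := le_abs_self (z j)
          have h3 := neg_abs_le (z j)
          linarith
        · rw [hCj]
          have h2 := le_abs_self (z j)
          have h1 := hbound.1
          linarith
      calc ‖(1 - δ) * (z j - (f δ ᵥ* M) j)‖ = |1 - δ| * |z j - (f δ ᵥ* M) j| := abs_mul _ _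
        _ ≤ |1 - δ| * Cj := mul_le_mul_of_nonneg_left habs (abs_nonneg _)
        _ = (1 - δ) * Cj := by rw [abs_of_nonneg (by linarith : (0:ℝ) ≤ 1 - δ)]
    · have h1 : Tendsto (fun δ : ℝ => (1 - δ) * Cj) (𝓝 1) (𝓝 ((1 - 1) * Cj)) :=
        ((continuous_const.sub continuous_id).mul continuous_const).tendsto 1
      have h2 : Tendsto (fun δ : ℝ => (1 - δ) * Cj) l (𝓝 0) := by
        have h3 : Tendsto (fun δ : ℝ => (1 - δ) * Cj) l (𝓝 ((1 - 1) * Cj)) :=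
          h1.mono_left (nhdsWithin_le_nhds (s := Set.Iio (1:ℝ)))
        simpa using h3
      exact h2
  -- ultrafilter argument
  rw [tendsto_iff_ultrafilter]
  intro U hU
  have hKU : K ∈ Ultrafilter.map f U := by
    exact hU hfK
  obtain ⟨y, hyK, hyU⟩ := isCompact_iff_ultrafilter_le_nhds.mp hKcomp (Ultrafilter.map f U)
    (le_principal_iff.mpr hKU)
  -- identify the limit point
  have hyTendsto : Tendsto f U (𝓝 y) := hyU
  have hy1 : Tendsto (fun δ => f δ - f δ ᵥ* M) U (𝓝 (y - y ᵥ* M)) :=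
    (hPhicont.tendsto y).comp hyTendsto
  have hy2 : Tendsto (fun δ => f δ - f δ ᵥ* M) U (𝓝 0) := hPhif.mono_left hU
  have hyeq0 : y - y ᵥ* M = 0 := tendsto_nhds_unique hy1 hy2
  have hyeig : y ᵥ* M = y := by
    have := sub_eq_zero.mp hyeq0
    exact this.symm
  have hynn : ∀ i, 0 ≤ y i := hyK.1
  have hyw : y ⬝ᵥ w = z ⬝ᵥ w := hyK.2
  have hyne : y ≠ 0 := by
    intro h
    rw [h, zero_dotProduct] at hyw
    exact hzw.ne' hyw.symm
  obtain ⟨b, hbpos, hyb⟩ := unique_eig hn0 hnonneg hirr hcnn hcne hceig hynn hyne hyeig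
  have hb1 : b = 1 := by
    have h1 : y ⬝ᵥ w = b * (c ⬝ᵥ w) := by
      rw [hyb, smul_dotProduct, smul_eq_mul]
    rw [hyw, hcw] at h1
    have h2 : (b - 1) * (z ⬝ᵥ w) = 0 := by linear_combination -h1
    rcases mul_eq_zero.mp h2 with h | h
    · linarith
    · exact absurd h hzw.ne'
  have hyc : y = c := by
    rw [hyb, hb1, one_smul]
  rw [← hyc]
  exact hyTendsto
end

section
/- Consider the network game with payoffs u_i(x) = −(γ_i/2)x_i² + (β_i + ∑_{j≠i} g_{ij} x_j) x_i where γ_i > 0, β_i > 0, g_{ij} ≥ 0. Set b_i = β_i/γ_i and m_{ij} = g_{ij}/γ_i (with m_{ii} = 0). If ρ(M) < 1, then x* = (I − M)^{-1} b is entrywise positive and is the unique Nash equilibrium: for each i, x_i* maximizes u_i over x_i ≥ 0 holding the other coordinates of x* fixed. -/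
open Matrix Filter Topology

attribute [local instance] Matrix.linftyOpNormedRing Matrix.linftyOpNormedAlgebra
  Matrix.linftyOpNormedAddCommGroup

lemma key {n : ℕ} (hn : 1 ≤ n) (M : Matrix (Fin n) (Fin n) ℝ)
    (hMnn : ∀ i j, 0 ≤ M i j) (hρ : specRad M < 1) :
    IsUnit (1 - M).det ∧ (∀ i j, 0 ≤ (1 - M)⁻¹ i j) ∧ ∀ i, 1 ≤ (1 - M)⁻¹ i i := by
  haveI : Nonempty (Fin n) := ⟨⟨0, hn⟩⟩
  haveI : CompleteSpace (Matrix (Fin n) (Fin n) ℂ) :=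
    FiniteDimensional.complete ℂ (Matrix (Fin n) (Fin n) ℂ)
  set A := M.map (algebraMap ℝ ℂ) with hA
  have hBdd : BddAbove {r : ℝ | ∃ μ : ℂ, μ ∈ spectrum ℂ A ∧ r = ‖μ‖} := by
    obtain ⟨C, hC⟩ := (spectrum.isBounded (𝕜 := ℂ) A).subset_closedBall (0 : ℂ)
    exact ⟨C, by rintro r ⟨μ, hμ, rfl⟩
                 simpa using mem_closedBall_zero_iff.mp (hC hμ)⟩
  have hspec : ∀ μ ∈ spectrum ℂ A, ‖μ‖ < 1 := fun μ hμ =>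
    lt_of_le_of_lt (le_csSup hBdd ⟨μ, hμ, rfl⟩) hρ
  have hsr : spectralRadius ℂ A < 1 := by
    have := spectrum.spectralRadius_lt_of_forall_lt (a := A) (r := 1)
      (fun z hz => by simpa [← NNReal.coe_lt_coe] using hspec z hz)
    simpa using this
  -- Gelfand's formula gives ‖A^k‖ → 0
  have hgel := spectrum.pow_nnnorm_pow_one_div_tendsto_nhds_spectralRadius A
  obtain ⟨c, hc1, hc2⟩ := exists_between hsr
  have hcTop : c ≠ ⊤ := (hc2.trans (by norm_num)).ne
  set r : NNReal := c.toNNReal with hr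
  have hcr : c = (r : ENNReal) := (ENNReal.coe_toNNReal hcTop).symm
  have hr1 : (r : ℝ) < 1 := by
    have : (r : ENNReal) < 1 := hcr ▸ hc2
    exact_mod_cast this
  have hr0 : (0:ℝ) ≤ r := r.coe_nonneg
  have hev : ∀ᶠ k : ℕ in atTop, ‖A ^ k‖ ≤ (r : ℝ) ^ k := by
    filter_upwards [hgel.eventually_lt_const hc1, eventually_ge_atTop 1] with k hk hk1
    have hkne : (k : ℝ) ≠ 0 := Nat.cast_ne_zero.mpr (by omega)
    have h1 : ((‖A ^ k‖₊ : ENNReal) ^ (1 / (k:ℝ))) ^ (k:ℝ) < (c) ^ (k:ℝ) :=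
      ENNReal.rpow_lt_rpow hk (by positivity)
    rw [← ENNReal.rpow_mul, one_div, inv_mul_cancel₀ hkne, ENNReal.rpow_one] at h1
    rw [hcr, ← ENNReal.coe_rpow_of_nonneg r (by positivity), ENNReal.coe_lt_coe] at h1
    have h2 : ‖A ^ k‖ ≤ ((r ^ ((k:ℝ)) : NNReal) : ℝ) := le_of_lt h1
    rwa [NNReal.coe_rpow, Real.rpow_natCast] at h2
  have hnorm0 : Tendsto (fun k : ℕ => ‖A ^ k‖) atTop (𝓝 0) := by
    have hpow0 : Tendsto (fun k : ℕ => (r:ℝ) ^ k) atTop (𝓝 0) :=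
      tendsto_pow_atTop_nhds_zero_of_lt_one hr0 hr1
    exact squeeze_zero' (Eventually.of_forall fun k => norm_nonneg _) hev hpow0
  -- entries of A^k are the (real) entries of M^k
  have hAk : ∀ k : ℕ, A ^ k = (M ^ k).map (algebraMap ℝ ℂ) := by
    intro k
    have : (algebraMap ℝ ℂ).mapMatrix (M ^ k) = ((algebraMap ℝ ℂ).mapMatrix M) ^ k :=
      map_pow _ _ _
    simpa [RingHom.mapMatrix_apply, hA] using this.symm
  have hentry : ∀ i j : Fin n, Tendsto (fun k : ℕ => (M ^ k) i j) atTop (𝓝 0) := by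
    intro i j
    apply squeeze_zero_norm _ hnorm0
    intro k
    rw [Real.norm_eq_abs]
    have h1 : ‖(A ^ k) i j‖ ≤ ‖A ^ k‖ := by
      have h2 : ‖(A ^ k) i j‖₊ ≤ ∑ j' : Fin n, ‖(A ^ k) i j'‖₊ :=
        Finset.single_le_sum (f := fun j' => ‖(A ^ k) i j'‖₊) (fun _ _ => zero_le) (Finset.mem_univ j)
      have h3 : (∑ j' : Fin n, ‖(A ^ k) i j'‖₊) ≤ ‖A ^ k‖₊ := by
        rw [Matrix.linfty_opNNNorm_def]
        exact Finset.le_sup (f := fun i' => ∑ j' : Fin n, ‖(A ^ k) i' j'‖₊) (Finset.mem_univ i)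
      exact_mod_cast h2.trans h3
    have h4 : (A ^ k) i j = ((M ^ k) i j : ℂ) := by rw [hAk k]; rfl
    rw [h4] at h1
    simpa [Complex.norm_real] using h1
  -- invertibility of 1 - M
  have hunitA : IsUnit (1 - A) := by
    have h1 : (1:ℂ) ∉ spectrum ℂ A := fun h => by simpa using hspec 1 h
    simpa using spectrum.notMem_iff.mp h1
  have hdet : IsUnit (1 - M).det := by
    have h1 : IsUnit (1 - A).det := (Matrix.isUnit_iff_isUnit_det _).mp hunitA
    have h2 : (1 - A) = (algebraMap ℝ ℂ).mapMatrix (1 - M) := by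
      rw [_root_.map_sub, _root_.map_one, RingHom.mapMatrix_apply]
    rw [h2, ← RingHom.map_det] at h1
    exact isUnit_iff_ne_zero.mpr fun h0 => by simp [h0] at h1
  have hQr : (1 - M)⁻¹ * (1 - M) = 1 := nonsing_inv_mul _ hdet
  have hgeom : ∀ k : ℕ, (1 - M) * (∑ l ∈ Finset.range k, M ^ l) = 1 - M ^ k := by
    intro k; induction k with
    | zero => simp
    | succ k ih =>
      rw [Finset.sum_range_succ, mul_add, ih, pow_succ]
      rw [sub_mul, one_mul, (Commute.self_pow M k).eq]
      abel
  have hP : ∀ k, (∑ l ∈ Finset.range k, M ^ l) = (1-M)⁻¹ - (1-M)⁻¹ * M ^ k := by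
    intro k
    have h1 := congrArg (fun B => (1-M)⁻¹ * B) (hgeom k)
    simpa [← mul_assoc, hQr, mul_sub, mul_one] using h1
  have hpow : ∀ (k : ℕ) (i j : Fin n), 0 ≤ (M ^ k) i j := by
    intro k
    induction k with
    | zero => intro i j; by_cases h : i = j <;> simp [Matrix.one_apply, h]
    | succ k ih =>
      intro i j
      rw [pow_succ, Matrix.mul_apply]
      exact Finset.sum_nonneg fun l _ => mul_nonneg (ih i l) (hMnn l j)
  have hQlim : ∀ i j, Tendsto (fun k => (∑ l ∈ Finset.range k, M ^ l) i j) atTop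
      (𝓝 ((1-M)⁻¹ i j)) := by
    intro i j
    have h1 : ∀ k, (∑ l ∈ Finset.range k, M ^ l) i j
        = (1-M)⁻¹ i j - ∑ l, (1-M)⁻¹ i l * (M ^ k) l j := by
      intro k; rw [hP k]; simp [Matrix.sub_apply, Matrix.mul_apply]
    simp only [h1]
    have h2 : Tendsto (fun k => ∑ l, (1-M)⁻¹ i l * (M ^ k) l j) atTop (𝓝 0) := by
      have h3 := tendsto_finset_sum (Finset.univ : Finset (Fin n))
        (fun l (_ : l ∈ Finset.univ) => ((hentry l j).const_mul ((1-M)⁻¹ i l)))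
      simpa using h3
    simpa using (tendsto_const_nhds (x := (1-M)⁻¹ i j)).sub h2
  refine ⟨hdet, ?_, ?_⟩
  · intro i j
    refine ge_of_tendsto' (hQlim i j) fun k => ?_
    rw [Matrix.sum_apply]
    exact Finset.sum_nonneg fun l _ => hpow l i j
  · intro i
    refine ge_of_tendsto (hQlim i i) ?_
    filter_upwards [eventually_ge_atTop 1] with k hk
    rw [Matrix.sum_apply]
    calc (1:ℝ) = (M ^ 0) i i := by simp [Matrix.one_apply]
    _ ≤ ∑ l ∈ Finset.range k, (M ^ l) i i :=
      Finset.single_le_sum (f := fun l => (M ^ l) i i) (fun l _ => hpow l i i)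
        (Finset.mem_range.mpr (by omega))

lemma quadr {γ c y z : ℝ} (hγ : 0 < γ) (hz : γ * z = c) :
    -(γ/2)*y^2 + c*y ≤ -(γ/2)*z^2 + c*z := by
  subst hz
  nlinarith [mul_nonneg hγ.le (sq_nonneg (y - z))]

lemma auxdiv {γ a S c : ℝ} (hγ : γ ≠ 0) : a - S/γ = c/γ ↔ γ * a = c + S := by
  rw [sub_eq_iff_eq_add, ← add_div, eq_div_iff hγ, mul_comm a γ]

theorem stmt_5 (n : ℕ) (hn : 1 ≤ n)
    (γ β : Fin n → ℝ) (hγ : ∀ i, 0 < γ i) (hβ : ∀ i, 0 < β i)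
    (g : Matrix (Fin n) (Fin n) ℝ) (hg : ∀ i j, i ≠ j → 0 ≤ g i j)
    (u : Fin n → (Fin n → ℝ) → ℝ)
    (hu : ∀ i x, u i x =
      -(γ i / 2) * (x i) ^ 2 + (β i + ∑ j ∈ Finset.univ.erase i, g i j * x j) * x i)
    (M : Matrix (Fin n) (Fin n) ℝ)
    (hM : ∀ i j, M i j = if i = j then 0 else g i j / γ i)
    (b : Fin n → ℝ) (hb : ∀ i, b i = β i / γ i)
    (hρ : specRad M < 1)
    (xstar : Fin n → ℝ) (hxstar : xstar = (1 - M)⁻¹.mulVec b) :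
    (∀ i, 0 < xstar i) ∧
    (∀ i, ∀ y : ℝ, 0 ≤ y → u i (Function.update xstar i y) ≤ u i xstar) ∧
    (∀ x : Fin n → ℝ, (∀ i, 0 ≤ x i) →
      (∀ i, ∀ y : ℝ, 0 ≤ y → u i (Function.update x i y) ≤ u i x) →
      x = xstar) := by
  have hγ' : ∀ i, (γ i) ≠ 0 := fun i => (hγ i).ne'
  have hMnn : ∀ i j, 0 ≤ M i j := by
    intro i j; rw [hM]
    split
    · exact le_refl 0
    · exact div_nonneg (hg i j ‹_›) (hγ i).le
  obtain ⟨hdet, hQ0, hQd⟩ := key hn M hMnn hρ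
  have hmv : ∀ (v : Fin n → ℝ) (i : Fin n), ((1 - M).mulVec v) i
      = v i - (∑ j ∈ Finset.univ.erase i, g i j * v j) / γ i := by
    intro v i
    rw [Matrix.sub_mulVec, Matrix.one_mulVec, Pi.sub_apply]
    congr 1
    show ∑ j, M i j * v j = (∑ j ∈ Finset.univ.erase i, g i j * v j) / γ i
    rw [← Finset.sum_erase_add _ _ (Finset.mem_univ i), hM i i, if_pos rfl, zero_mul, add_zero,
      Finset.sum_div]
    refine Finset.sum_congr rfl fun j hj => ?_
    rw [hM i j, if_neg (Finset.ne_of_mem_erase hj).symm, div_mul_eq_mul_div]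
  have halg : ∀ (v : Fin n → ℝ) (i : Fin n), ((1 - M).mulVec v) i = b i ↔
      γ i * v i = β i + ∑ j ∈ Finset.univ.erase i, g i j * v j := by
    intro v i
    rw [hmv, hb]
    exact auxdiv (hγ' i)
  have heq : ∀ i, ((1 - M).mulVec xstar) i = b i := by
    intro i
    rw [hxstar, Matrix.mulVec_mulVec, Matrix.mul_nonsing_inv _ hdet, Matrix.one_mulVec]
  have hcx : ∀ i, γ i * xstar i = β i + ∑ j ∈ Finset.univ.erase i, g i j * xstar j :=
    fun i => (halg xstar i).mp (heq i)
  have hbpos : ∀ j, 0 < b j := fun j => by rw [hb]; exact div_pos (hβ j) (hγ j)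
  have hpos : ∀ i, 0 < xstar i := by
    intro i
    have h1 : xstar i = ∑ j, (1-M)⁻¹ i j * b j := by
      rw [hxstar]; simp [Matrix.mulVec, dotProduct]
    calc (0:ℝ) < b i := hbpos i
    _ ≤ (1-M)⁻¹ i i * b i := le_mul_of_one_le_left (hbpos i).le (hQd i)
    _ ≤ ∑ j, (1-M)⁻¹ i j * b j :=
      Finset.single_le_sum (f := fun j => (1-M)⁻¹ i j * b j)
        (fun j _ => mul_nonneg (hQ0 i j) (hbpos j).le) (Finset.mem_univ i)
    _ = xstar i := h1.symm
  have ueval : ∀ (i : Fin n) (x : Fin n → ℝ) (y : ℝ), u i (Function.update x i y)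
      = -(γ i/2)*y^2 + (β i + ∑ j ∈ Finset.univ.erase i, g i j * x j)*y := by
    intro i x y
    rw [hu]
    have h1 : Function.update x i y i = y := Function.update_self i y x
    have h2 : ∑ j ∈ Finset.univ.erase i, g i j * Function.update x i y j
        = ∑ j ∈ Finset.univ.erase i, g i j * x j :=
      Finset.sum_congr rfl fun j hj => by rw [Function.update_of_ne (Finset.ne_of_mem_erase hj)]
    rw [h1, h2]
  refine ⟨hpos, ?_, ?_⟩
  · intro i y hy
    rw [ueval i xstar y, hu i xstar]
    exact quadr (hγ i) (hcx i)
  · intro x hx hne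
    have hxi : ∀ i, γ i * x i = β i + ∑ j ∈ Finset.univ.erase i, g i j * x j := by
      intro i
      set ci := β i + ∑ j ∈ Finset.univ.erase i, g i j * x j with hci
      have hcpos : 0 < ci := by
        refine add_pos_of_pos_of_nonneg (hβ i) ?_
        exact Finset.sum_nonneg fun j hj =>
          mul_nonneg (hg i j (Finset.ne_of_mem_erase hj).symm) (hx j)
      set z := ci / γ i with hzdef
      have hz : γ i * z = ci := by rw [hzdef, mul_comm, div_mul_cancel₀ ci (hγ' i)]
      have hz0 : 0 ≤ z := le_of_lt (div_pos hcpos (hγ i))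
      have h1 := hne i z hz0
      rw [ueval i x z, hu i x] at h1
      have h2 : -(γ i/2)*(x i)^2 + ci*(x i) ≤ -(γ i/2)*z^2 + ci*z := quadr (hγ i) hz
      have h3 : (x i - z)^2 ≤ 0 := by nlinarith
      have h4 : x i - z = 0 :=
        pow_eq_zero_iff (n := 2) (by norm_num) |>.mp (le_antisymm h3 (sq_nonneg _))
      rw [show x i = z from sub_eq_zero.mp h4, hz]
    have hxeq : (1 - M).mulVec x = b := funext fun i => (halg x i).mpr (hxi i)
    have h5 : x = (1 - M)⁻¹.mulVec b := by
      have h6 := congrArg (fun w => (1 - M)⁻¹.mulVec w) hxeq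
      simpa [Matrix.mulVec_mulVec, Matrix.nonsing_inv_mul _ hdet, Matrix.one_mulVec] using h6
    rw [h5, hxstar]
end

section
/- Let B be a nonnegative irreducible n×n matrix with zero diagonal and spectral radius ρ(B) > 1, and let D be an n×n matrix with d_{ii} < 0 for all i and d_{ij} = −d_{ii} B_{ij} for i ≠ j (i.e., B_{ij} = d_{ij}/(−d_{ii})). Then there exists a strictly positive vector c ∈ ℝ^n such that (Dc)_i > 0 for every i. -/
open Matrix Filter Topology

/-- Powers of an entrywise nonnegative matrix are entrywise nonnegative. -/
lemma pow_entry_nonneg {n : ℕ} {B : Matrix (Fin n) (Fin n) ℝ}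
    (hB : ∀ i j, 0 ≤ B i j) (t : ℕ) : ∀ i j, 0 ≤ (B ^ t) i j := by
  induction t with
  | zero =>
    intro i j
    simp only [pow_zero, Matrix.one_apply]
    split <;> norm_num
  | succ t ih =>
    intro i j
    rw [pow_succ, Matrix.mul_apply]
    exact Finset.sum_nonneg fun k _ => mul_nonneg (ih i k) (hB k j)

/-- Monotonicity of multiplication by a nonnegative matrix. -/
lemma mulVec_entry_mono {n : ℕ} {M : Matrix (Fin n) (Fin n) ℝ}
    (hM : ∀ i j, 0 ≤ M i j) {u v : Fin n → ℝ} (huv : ∀ j, u j ≤ v j) (i : Fin n) :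
    M.mulVec u i ≤ M.mulVec v i := by
  simp only [Matrix.mulVec, dotProduct]
  exact Finset.sum_le_sum fun j _ => mul_le_mul_of_nonneg_left (huv j) (hM i j)

/-- There is a nonnegative nonzero vector `w` with `B w ≥ ρ w` where `ρ = |μ| > 1`,
obtained from a complex eigenvector. -/
lemma exists_subinvariant_vec {n : ℕ} {B : Matrix (Fin n) (Fin n) ℝ}
    (hnonneg : ∀ i j, 0 ≤ B i j) (hρ : 1 < specRad B) :
    ∃ (ρ : ℝ) (w : Fin n → ℝ), 1 < ρ ∧ (∀ j, 0 ≤ w j) ∧ (∃ j, 0 < w j) ∧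
      ∀ i, ρ * w i ≤ B.mulVec w i := by
  set S : Set ℝ :=
    {r : ℝ | ∃ μ : ℂ, μ ∈ spectrum ℂ (B.map (algebraMap ℝ ℂ)) ∧ r = ‖μ‖} with hS
  have hSne : S.Nonempty := by
    by_contra h
    rw [Set.not_nonempty_iff_eq_empty] at h
    rw [specRad, ← hS, h, Real.sSup_empty] at hρ
    linarith
  have hSbdd : BddAbove S := by
    by_contra h
    rw [specRad, ← hS, Real.sSup_of_not_bddAbove h] at hρ
    linarith
  obtain ⟨r, ⟨μ, hμmem, rfl⟩, hr⟩ := exists_lt_of_lt_csSup hSne hρ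
  -- get eigenvector
  set M := B.map (algebraMap ℝ ℂ) with hM
  have hdet : (algebraMap ℂ (Matrix (Fin n) (Fin n) ℂ) μ - M).det = 0 := by
    by_contra hne
    exact (spectrum.mem_iff.mp hμmem)
      ((Matrix.isUnit_iff_isUnit_det _).mpr (Ne.isUnit hne))
  obtain ⟨v, hv0, hveq⟩ := (Matrix.exists_mulVec_eq_zero_iff).mpr hdet
  have hvEig : ∀ i, M.mulVec v i = μ * v i := by
    intro i
    have h1 : (algebraMap ℂ (Matrix (Fin n) (Fin n) ℂ) μ - M).mulVec v i = 0 := by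
      rw [hveq]; rfl
    rw [Matrix.sub_mulVec] at h1
    have h2 : (algebraMap ℂ (Matrix (Fin n) (Fin n) ℂ) μ).mulVec v i = μ * v i := by
      rw [Algebra.algebraMap_eq_smul_one, Matrix.smul_mulVec, Matrix.one_mulVec]
      simp
    have := sub_eq_zero.mp h1
    rw [← this, h2]
  refine ⟨‖μ‖, fun j => ‖v j‖, hr, fun j => (norm_nonneg _),
    ?_, ?_⟩
  · obtain ⟨j, hj⟩ := Function.ne_iff.mp hv0
    exact ⟨j, norm_pos_iff.mpr hj⟩
  · intro i
    have key : ‖μ * v i‖ ≤ ∑ j, B i j * ‖v j‖ := by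
      rw [← hvEig i]
      have : M.mulVec v i = ∑ j, (B i j : ℂ) * v j := by
        simp [Matrix.mulVec, dotProduct, hM, Matrix.map_apply]
      rw [this]
      calc ‖∑ j, (B i j : ℂ) * v j‖ ≤ ∑ j, ‖(B i j : ℂ) * v j‖ :=
            norm_sum_le _ _
        _ = ∑ j, B i j * ‖v j‖ := by
            refine Finset.sum_congr rfl fun j _ => ?_
            rw [norm_mul, Complex.norm_real, Real.norm_eq_abs, abs_of_nonneg (hnonneg i j)]
    rw [norm_mul] at key
    simpa [Matrix.mulVec, dotProduct] using key

theorem stmt_11 (n : ℕ) (B : Matrix (Fin n) (Fin n) ℝ)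
    (hnonneg : ∀ i j, 0 ≤ B i j) (hdiag : ∀ i, B i i = 0)
    (hirr : MatIrreducible B) (hρ : 1 < specRad B)
    (D : Matrix (Fin n) (Fin n) ℝ)
    (hDdiag : ∀ i, D i i < 0)
    (hDoff : ∀ i j, i ≠ j → D i j = -(D i i) * B i j) :
    ∃ c : Fin n → ℝ, (∀ i, 0 < c i) ∧ ∀ i, 0 < D.mulVec c i := by
  obtain ⟨ρ, w, hρ1, hw0, ⟨j₀, hj₀⟩, hsub⟩ := exists_subinvariant_vec hnonneg hρ
  -- choice of times from irreducibility
  choose T hT0 hTpos using fun i => hirr i j₀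
  set m : ℕ := Finset.univ.sup T with hm
  -- define c
  set c : Fin n → ℝ := fun i => ∑ t ∈ Finset.range (m + 1), (B ^ t).mulVec w i with hc
  -- basic facts
  have hBtw_nonneg : ∀ t i, 0 ≤ (B ^ t).mulVec w i := by
    intro t i
    simp only [Matrix.mulVec, dotProduct]
    exact Finset.sum_nonneg fun j _ => mul_nonneg (pow_entry_nonneg hnonneg t i j) (hw0 j)
  have hcpos : ∀ i, 0 < c i := by
    intro i
    have hTi : T i ∈ Finset.range (m + 1) := by
      rw [Finset.mem_range, Nat.lt_succ_iff]
      exact Finset.le_sup (Finset.mem_univ i)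
    have hterm : 0 < (B ^ (T i)).mulVec w i := by
      simp only [Matrix.mulVec, dotProduct]
      have h1 : (B ^ T i) i j₀ * w j₀ ≤ ∑ j, (B ^ T i) i j * w j :=
        Finset.single_le_sum
          (fun j _ => mul_nonneg (pow_entry_nonneg hnonneg _ i j) (hw0 j))
          (Finset.mem_univ j₀)
      exact lt_of_lt_of_le (mul_pos (hTpos i) hj₀) h1
    exact lt_of_lt_of_le hterm <|
      Finset.single_le_sum (fun t _ => hBtw_nonneg t i) hTi
  -- B^{t+1} w ≥ ρ B^t w
  have hstep : ∀ t i, ρ * (B ^ t).mulVec w i ≤ (B ^ (t + 1)).mulVec w i := by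
    intro t i
    have h1 : (B ^ (t + 1)).mulVec w = (B ^ t).mulVec (B.mulVec w) := by
      rw [Matrix.mulVec_mulVec, ← pow_succ]
    rw [h1]
    calc ρ * (B ^ t).mulVec w i = (B ^ t).mulVec (fun j => ρ * w j) i := by
          simp only [Matrix.mulVec, dotProduct, Finset.mul_sum]
          exact Finset.sum_congr rfl fun j _ => by ring
      _ ≤ (B ^ t).mulVec (B.mulVec w) i :=
          mulVec_entry_mono (pow_entry_nonneg hnonneg t) hsub i
  -- Bc ≥ ρ c
  have hBc : ∀ i, ρ * c i ≤ B.mulVec c i := by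
    have hceq : c = ∑ t ∈ Finset.range (m + 1), (B ^ t).mulVec w := by
      funext i; simp [hc, Finset.sum_apply]
    have hvec : B.mulVec c = ∑ t ∈ Finset.range (m + 1), (B ^ (t + 1)).mulVec w := by
      rw [hceq, ← Matrix.mulVecLin_apply, map_sum]
      refine Finset.sum_congr rfl fun t _ => ?_
      rw [Matrix.mulVecLin_apply, Matrix.mulVec_mulVec, ← pow_succ']
    intro i
    rw [hvec, hc]
    simp only [Finset.sum_apply, Finset.mul_sum]
    exact Finset.sum_le_sum fun t _ => hstep t i
  have hBc' : ∀ i, c i < B.mulVec c i := fun i =>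
    lt_of_lt_of_le (by nlinarith [hcpos i]) (hBc i)
  refine ⟨c, hcpos, fun i => ?_⟩
  have hDc : D.mulVec c i = -(D i i) * (B.mulVec c i - c i) := by
    simp only [Matrix.mulVec, dotProduct]
    rw [← Finset.add_sum_erase _ _ (Finset.mem_univ i),
        ← Finset.add_sum_erase _ (fun j => B i j * c j) (Finset.mem_univ i)]
    rw [hdiag i]
    have : ∀ j ∈ Finset.univ.erase i, D i j * c j = -(D i i) * (B i j * c j) := by
      intro j hj
      rw [hDoff i j (Ne.symm (Finset.ne_of_mem_erase hj))]
      ring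
    rw [Finset.sum_congr rfl this, ← Finset.mul_sum]
    ring
  rw [hDc]
  have := hBc' i
  nlinarith [hDdiag i]
end

section
/- Let u_i: ℝ^n → ℝ be differentiable strictly concave functions and x ∈ ℝ^n a point where ∂u_i/∂x_i(x) = −1 for all i, and suppose the benefits matrix B(x) (B_{ij} = ∂u_i/∂x_j for i≠j, B_{ii}=0, all entries nonnegative, B irreducible) has spectral radius exactly 1. Then there exists a strictly positive vector θ such that x maximizes ∑_i θ_i u_i over ℝ^n; in particular x is Pareto efficient. -/
open Matrix Filter Topology
open scoped ENNReal NNReal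

section Helpers

variable {n : ℕ}

/-- Entries of powers of an entrywise-nonneg matrix are nonneg. -/
lemma pow_entries_nonneg {A : Matrix (Fin n) (Fin n) ℝ} (hA : ∀ i j, 0 ≤ A i j) (t : ℕ) :
    ∀ i j, 0 ≤ (A ^ t) i j := by
  induction t with
  | zero => intro i j; simp [Matrix.one_apply]; split <;> norm_num
  | succ t ih =>
    intro i j
    rw [pow_succ, Matrix.mul_apply]
    exact Finset.sum_nonneg fun k _ => mul_nonneg (ih i k) (hA k j)

lemma mul_entries_nonneg {A C : Matrix (Fin n) (Fin n) ℝ} (hA : ∀ i j, 0 ≤ A i j)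
    (hC : ∀ i j, 0 ≤ C i j) : ∀ i j, 0 ≤ (A * C) i j := by
  intro i j
  rw [Matrix.mul_apply]
  exact Finset.sum_nonneg fun k _ => mul_nonneg (hA i k) (hC k j)

lemma mulVec_mono {A : Matrix (Fin n) (Fin n) ℝ} (hA : ∀ i j, 0 ≤ A i j) {v w : Fin n → ℝ}
    (h : ∀ i, v i ≤ w i) : ∀ i, (A *ᵥ v) i ≤ (A *ᵥ w) i := by
  intro i
  simp only [Matrix.mulVec, dotProduct]
  exact Finset.sum_le_sum fun j _ => mul_le_mul_of_nonneg_left (h j) (hA i j)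

/-- concave function with zero derivative at a point is maximized there -/
lemma concave_max_of_fderiv_zero {E : Type*} [NormedAddCommGroup E] [NormedSpace ℝ E]
    {f : E → ℝ} (hf : ConcaveOn ℝ Set.univ f) {x : E} (hd : DifferentiableAt ℝ f x)
    (h0 : fderiv ℝ f x = 0) (y : E) : f y ≤ f x := by
  set g : ℝ → E := fun t => x + t • (y - x) with hg
  have hL : HasDerivAt g (y - x) 0 := by
    simpa [hg] using ((hasDerivAt_id (0:ℝ)).smul_const (y - x)).const_add x
  have hgd : HasDerivAt (f ∘ g) 0 0 := by
    have hgx : g 0 = x := by simp [hg]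
    have hdf := hd.hasFDerivAt
    rw [← hgx] at hdf
    have := hdf.comp_hasDerivAt 0 hL
    simpa [h0, hgx] using this
  -- slope bound from concavity
  have hslope : ∀ t : ℝ, t ∈ Set.Ioc (0:ℝ) 1 → f y - f x ≤ ((f ∘ g) t - (f ∘ g) 0) / t := by
    intro t ht
    have h1 : f (x + t • (y - x)) ≥ (1 - t) * f x + t * f y := by
      have := hf.2 (Set.mem_univ x) (Set.mem_univ y) (by linarith [ht.2] : (0:ℝ) ≤ 1 - t)
        (le_of_lt ht.1) (by ring)
      have hxy : (1 - t) • x + t • y = x + t • (y - x) := by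
        module
      rw [hxy] at this
      simpa [smul_eq_mul] using this
    have hg0 : (f ∘ g) 0 = f x := by simp [hg]
    have hgt : (f ∘ g) t = f (x + t • (y - x)) := rfl
    rw [ge_iff_le] at h1
    rw [le_div_iff₀ ht.1, hg0, hgt]
    nlinarith [h1]
  -- take limit t → 0+
  have htend : Tendsto (fun t => ((f ∘ g) t - (f ∘ g) 0) / t) (𝓝[>] (0:ℝ)) (𝓝 0) := by
    have := hgd.hasDerivWithinAt (s := Set.Ioi (0:ℝ))
    have h2 := (hasDerivWithinAt_iff_tendsto_slope.mp this)
    have h3 : Tendsto (slope (f ∘ g) 0) (𝓝[>] (0:ℝ)) (𝓝 0) :=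
      h2.mono_left (nhdsWithin_mono _ (fun t ht => ⟨ht, ne_of_gt ht⟩))
    refine h3.congr fun t => ?_
    rw [slope_def_field]
    rw [sub_zero]
  have hev : ∀ᶠ t in (𝓝[>] (0:ℝ)), f y - f x ≤ ((f ∘ g) t - (f ∘ g) 0) / t := by
    filter_upwards [Ioc_mem_nhdsGT_of_mem (Set.mem_Ico.mpr ⟨le_refl 0, one_pos⟩)] with t ht
    exact hslope t ht
  have := ge_of_tendsto htend hev
  linarith

end Helpers

section Perron

attribute [local instance] Matrix.linftyOpNormedRing Matrix.linftyOpNormedAlgebra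

lemma entry_le_norm {m : ℕ} (M : Matrix (Fin m) (Fin m) ℂ) (i j : Fin m) :
    ‖M i j‖ ≤ ‖M‖ := by
  have h1 : ‖M i j‖₊ ≤ ∑ k, ‖M i k‖₊ :=
    Finset.single_le_sum (f := fun k => ‖M i k‖₊) (fun k _ => zero_le) (Finset.mem_univ j)
  have h2 : (∑ k, ‖M i k‖₊) ≤ (Finset.univ : Finset (Fin m)).sup fun i' => ∑ k, ‖M i' k‖₊ :=
    Finset.le_sup (f := fun i' => ∑ k, ‖M i' k‖₊) (Finset.mem_univ i)
  have := Matrix.linfty_opNorm_def M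
  rw [this]
  calc ‖M i j‖ = (‖M i j‖₊ : ℝ) := rfl
    _ ≤ ((∑ k, ‖M i k‖₊ : NNReal) : ℝ) := by exact_mod_cast h1
    _ ≤ _ := by exact_mod_cast h2

lemma perron {n : ℕ} (B : Matrix (Fin n) (Fin n) ℝ)
    (hBnonneg : ∀ i j, 0 ≤ B i j) (hirr : MatIrreducible B) (hρ : specRad B = 1) :
    ∃ θ : Fin n → ℝ, (∀ i, 0 < θ i) ∧ ∀ j, ∑ i, θ i * B i j = θ j := by
  classical
  -- n must be positive
  rcases Nat.eq_zero_or_pos n with hn0 | hn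
  · exfalso
    subst hn0
    have hsub : Subsingleton (Matrix (Fin 0) (Fin 0) ℂ) :=
      ⟨fun a b => by ext i j; exact absurd i.2 (by omega)⟩
    have hempty : {r : ℝ | ∃ μ : ℂ, μ ∈ spectrum ℂ (B.map (algebraMap ℝ ℂ)) ∧
        r = ‖μ‖} = ∅ := by
      ext r
      simp only [Set.mem_setOf_eq, Set.mem_empty_iff_false, iff_false]
      rintro ⟨μ, hμ, -⟩
      exact (spectrum.mem_iff.mp hμ) (@isUnit_of_subsingleton _ _ hsub _)
    rw [specRad, hempty, Real.sSup_empty] at hρ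
    norm_num at hρ
  haveI : Nonempty (Fin n) := ⟨⟨0, hn⟩⟩
  haveI : Nontrivial (Matrix (Fin n) (Fin n) ℂ) := by
    refine ⟨0, 1, fun h => ?_⟩
    have := congrFun (congrFun h ⟨0, hn⟩) ⟨0, hn⟩
    simp [Matrix.one_apply] at this
  set Mc := B.map (algebraMap ℝ ℂ) with hMc
  set S := {r : ℝ | ∃ μ : ℂ, μ ∈ spectrum ℂ Mc ∧ r = ‖μ‖} with hS
  have hSimg : S = (fun z : ℂ => ‖z‖) '' (spectrum ℂ Mc) := by
    ext r; constructor
    · rintro ⟨μ, hμ, rfl⟩; exact ⟨μ, hμ, rfl⟩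
    · rintro ⟨μ, hμ, rfl⟩; exact ⟨μ, hμ, rfl⟩
  have hcpt : IsCompact (spectrum ℂ Mc) := spectrum.isCompact Mc
  have hne : (spectrum ℂ Mc).Nonempty := spectrum.nonempty Mc
  have hScpt : IsCompact S := by rw [hSimg]; exact hcpt.image continuous_norm
  have hSne : S.Nonempty := by rw [hSimg]; exact hne.image _
  have hSbdd : BddAbove S := hScpt.bddAbove
  -- get eigenvalue of modulus 1
  have hmem : (1:ℝ) ∈ S := by
    have := hScpt.sSup_mem hSne
    rwa [show sSup S = 1 from hρ] at this
  obtain ⟨μ, hμspec, hμabs⟩ := hmem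
  -- get eigenvector of transpose
  have hdet : (algebraMap ℂ (Matrix (Fin n) (Fin n) ℂ) μ - Mc).det = 0 := by
    by_contra hdet
    exact (spectrum.mem_iff.mp hμspec)
      ((Matrix.isUnit_iff_isUnit_det _).mpr (isUnit_iff_ne_zero.mpr hdet))
  have hdetT : (algebraMap ℂ (Matrix (Fin n) (Fin n) ℂ) μ - Mcᵀ).det = 0 := by
    rw [← Matrix.det_transpose]
    rw [Matrix.transpose_sub]
    have : (algebraMap ℂ (Matrix (Fin n) (Fin n) ℂ) μ)ᵀ =
        algebraMap ℂ (Matrix (Fin n) (Fin n) ℂ) μ := by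
      rw [Algebra.algebraMap_eq_smul_one, Matrix.transpose_smul, Matrix.transpose_one]
    rw [this, Matrix.transpose_transpose]
    exact hdet
  obtain ⟨v, hvne, hv⟩ := Matrix.exists_mulVec_eq_zero_iff.mpr hdetT
  have heig : Mcᵀ *ᵥ v = μ • v := by
    have h1 : (algebraMap ℂ (Matrix (Fin n) (Fin n) ℂ) μ) *ᵥ v - Mcᵀ *ᵥ v = 0 := by
      rw [← Matrix.sub_mulVec]; exact hv
    have h2 : (algebraMap ℂ (Matrix (Fin n) (Fin n) ℂ) μ) *ᵥ v = μ • v := by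
      rw [Algebra.algebraMap_eq_smul_one, Matrix.smul_mulVec, Matrix.one_mulVec]
    rw [h2] at h1
    linear_combination (norm := module) -h1
  -- absolute values: A = Bᵀ, w = |v|
  set A := Bᵀ with hA
  have hAnn : ∀ i j, 0 ≤ A i j := fun i j => hBnonneg j i
  have hirrA : MatIrreducible A := by
    intro i j
    obtain ⟨t, ht, htpos⟩ := hirr j i
    exact ⟨t, ht, by rwa [hA, ← Matrix.transpose_pow]⟩
  set w : Fin n → ℝ := fun i => ‖v i‖ with hw
  have hwnn : ∀ i, 0 ≤ w i := fun i => norm_nonneg _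
  obtain ⟨j0, hj0⟩ : ∃ j, 0 < w j := by
    by_contra h
    push_neg at h
    apply hvne
    funext i
    have : w i = 0 := le_antisymm (h i) (hwnn i)
    simpa [hw, norm_eq_zero] using this
  have hMcT : ∀ i j, Mcᵀ i j = (algebraMap ℝ ℂ) (A i j) := fun i j => rfl
  have hsuper : ∀ i, w i ≤ (A *ᵥ w) i := by
    intro i
    have h1 : w i = ‖(Mcᵀ *ᵥ v) i‖ := by
      rw [heig]
      simp [hw, _root_.map_mul, ← hμabs]
    have h2 : ‖(Mcᵀ *ᵥ v) i‖ ≤ ∑ j, A i j * w j := by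
      rw [Matrix.mulVec]
      refine le_trans (norm_sum_le _ _) ?_
      refine Finset.sum_le_sum fun j _ => ?_
      show ‖Mcᵀ i j * v j‖ ≤ A i j * w j
      rw [hMcT, norm_mul]
      have : ‖(algebraMap ℝ ℂ) (A i j)‖ = A i j := by
        simp [Complex.norm_real, abs_of_nonneg (hAnn i j)]
      rw [this]
    rw [h1]
    simpa [Matrix.mulVec, dotProduct] using h2
  -- case split on equality
  by_cases hcase : ∀ i, (A *ᵥ w) i = w i
  · -- eigenvector case: prove positivity and conclude
    have hfix : ∀ t : ℕ, (A ^ t) *ᵥ w = w := by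
      intro t
      induction t with
      | zero => simp
      | succ t ih =>
        rw [pow_succ, ← Matrix.mulVec_mulVec]
        rw [show A *ᵥ w = w from funext hcase, ih]
    have hwpos : ∀ i, 0 < w i := by
      intro i
      obtain ⟨t, htpos, hAT⟩ := hirrA i j0
      have h1 : w i = ∑ k, (A ^ t) i k * w k := by
        conv_lhs => rw [← hfix t]
        rfl
      rw [h1]
      have : (A ^ t) i j0 * w j0 ≤ ∑ k, (A ^ t) i k * w k :=
        Finset.single_le_sum (f := fun k => (A ^ t) i k * w k)
          (fun k _ => mul_nonneg (pow_entries_nonneg hAnn t i k) (hwnn k)) (Finset.mem_univ j0)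
      calc (0:ℝ) < (A ^ t) i j0 * w j0 := mul_pos hAT hj0
        _ ≤ _ := this
    refine ⟨w, hwpos, fun j => ?_⟩
    have := hcase j
    rw [Matrix.mulVec, dotProduct] at this
    rw [← this]
    refine Finset.sum_congr rfl fun i _ => ?_
    rw [hA]
    simp [Matrix.transpose_apply, mul_comm]
  · -- strict supersolution: contradiction with spectral radius 1
    exfalso
    push_neg at hcase
    obtain ⟨k0, hk0⟩ := hcase
    set z : Fin n → ℝ := fun i => (A *ᵥ w) i - w i with hz
    have hznn : ∀ i, 0 ≤ z i := fun i => sub_nonneg.mpr (hsuper i)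
    have hzk0 : 0 < z k0 := lt_of_le_of_ne (hznn k0) (fun h => hk0 (by simp [hz, sub_eq_zero] at h; linarith [h]))
    have hAwz : A *ᵥ w = w + z := by funext i; simp [hz]
    -- the matrix C = 1 + A and its powers
    set C : Matrix (Fin n) (Fin n) ℝ := 1 + A with hC
    have hCnn : ∀ i j, 0 ≤ C i j := by
      intro i j
      have := hAnn i j
      simp only [hC, Matrix.add_apply, Matrix.one_apply]
      split <;> linarith
    have hpowAC : ∀ t i j, (A ^ t) i j ≤ (C ^ t) i j := by
      intro t
      induction t with
      | zero => intro i j; rfl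
      | succ t ih =>
        intro i j
        rw [pow_succ, pow_succ, Matrix.mul_apply, Matrix.mul_apply]
        refine Finset.sum_le_sum fun k _ => ?_
        calc (A ^ t) i k * A k j ≤ (C ^ t) i k * A k j :=
              mul_le_mul_of_nonneg_right (ih i k) (hAnn k j)
          _ ≤ (C ^ t) i k * C k j := by
              refine mul_le_mul_of_nonneg_left ?_ (pow_entries_nonneg hCnn t i k)
              have := hAnn k j
              simp only [hC, Matrix.add_apply, Matrix.one_apply]
              split <;> linarith
    have hCmono : ∀ s t : ℕ, s ≤ t → ∀ i j, (C ^ s) i j ≤ (C ^ t) i j := by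
      intro s t hst
      induction t with
      | zero => intro i j; rw [Nat.le_zero.mp hst]
      | succ t ih =>
        rcases Nat.lt_or_ge s (t+1) with h | h
        · intro i j
          refine le_trans (ih (by omega) i j) ?_
          have : C ^ (t+1) = C ^ t + C ^ t * A := by
            rw [pow_succ, hC, mul_add, mul_one]
          rw [this, Matrix.add_apply]
          have := mul_entries_nonneg (pow_entries_nonneg hCnn t) hAnn i j
          linarith
        · intro i j
          have : s = t + 1 := by omega
          rw [this]
    choose tf htf1 htf2 using hirrA
    set T : ℕ := Finset.univ.sup (fun p : Fin n × Fin n => tf p.1 p.2) with hT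
    have hCT : ∀ i j, 0 < (C ^ T) i j := by
      intro i j
      have h1 : tf i j ≤ T :=
        Finset.le_sup (f := fun p : Fin n × Fin n => tf p.1 p.2) (Finset.mem_univ (i, j))
      calc (0:ℝ) < (A ^ tf i j) i j := htf2 i j
        _ ≤ (C ^ tf i j) i j := hpowAC _ i j
        _ ≤ (C ^ T) i j := hCmono _ _ h1 i j
    set ws : Fin n → ℝ := (C ^ T) *ᵥ w with hws
    set zs : Fin n → ℝ := (C ^ T) *ᵥ z with hzs
    have hwspos : ∀ i, 0 < ws i := by
      intro i
      have : (C ^ T) i j0 * w j0 ≤ ∑ k, (C ^ T) i k * w k :=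
        Finset.single_le_sum (f := fun k => (C ^ T) i k * w k)
          (fun k _ => mul_nonneg (pow_entries_nonneg hCnn T i k) (hwnn k)) (Finset.mem_univ j0)
      calc (0:ℝ) < (C ^ T) i j0 * w j0 := mul_pos (hCT i j0) hj0
        _ ≤ ∑ k, (C ^ T) i k * w k := this
        _ = ws i := rfl
    have hzspos : ∀ i, 0 < zs i := by
      intro i
      have : (C ^ T) i k0 * z k0 ≤ ∑ k, (C ^ T) i k * z k :=
        Finset.single_le_sum (f := fun k => (C ^ T) i k * z k)
          (fun k _ => mul_nonneg (pow_entries_nonneg hCnn T i k) (hznn k)) (Finset.mem_univ k0)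
      calc (0:ℝ) < (C ^ T) i k0 * z k0 := mul_pos (hCT i k0) hzk0
        _ ≤ ∑ k, (C ^ T) i k * z k := this
        _ = zs i := rfl
    have hcomm : A * C ^ T = C ^ T * A := by
      have h1 : Commute A C := by
        rw [hC]
        exact (Commute.one_right A).add_right (Commute.refl A)
      exact (h1.pow_right T).eq
    have hAws : A *ᵥ ws = ws + zs := by
      rw [hws, Matrix.mulVec_mulVec, hcomm, ← Matrix.mulVec_mulVec, hAwz,
        Matrix.mulVec_add]
    -- growth rate δ > 1
    have hune : (Finset.univ : Finset (Fin n)).Nonempty := Finset.univ_nonempty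
    set δ : ℝ := Finset.univ.inf' hune (fun i => (A *ᵥ ws) i / ws i) with hδ
    have hδ1 : 1 < δ := by
      rw [hδ, Finset.lt_inf'_iff]
      intro i _
      rw [lt_div_iff₀ (hwspos i), hAws, one_mul]
      have := hzspos i
      simp only [Pi.add_apply]
      linarith
    have hgeo : ∀ i, δ * ws i ≤ (A *ᵥ ws) i := by
      intro i
      have h1 : δ ≤ (A *ᵥ ws) i / ws i := Finset.inf'_le _ (Finset.mem_univ i)
      exact (le_div_iff₀ (hwspos i)).mp h1
    have hδ0 : (0:ℝ) < δ := lt_trans one_pos hδ1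
    have hpowδ : ∀ t i, δ ^ t * ws i ≤ ((A ^ t) *ᵥ ws) i := by
      intro t
      induction t with
      | zero => intro i; simp
      | succ t ih =>
        intro i
        have h1 : (A ^ (t+1)) *ᵥ ws = (A ^ t) *ᵥ (A *ᵥ ws) := by
          rw [pow_succ]
          exact (Matrix.mulVec_mulVec ws (A ^ t) A).symm
        rw [h1]
        have h2 : ∀ j, (δ • ws) j ≤ (A *ᵥ ws) j := by
          intro j; simpa [smul_eq_mul] using hgeo j
        have h3 := mulVec_mono (pow_entries_nonneg hAnn t) h2 i
        have h4 : ((A ^ t) *ᵥ (δ • ws)) i = δ * ((A ^ t) *ᵥ ws) i := by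
          rw [Matrix.mulVec_smul]
          simp [smul_eq_mul]
        calc δ ^ (t+1) * ws i = δ * (δ ^ t * ws i) := by ring
          _ ≤ δ * ((A ^ t) *ᵥ ws) i :=
              mul_le_mul_of_nonneg_left (ih i) (le_of_lt hδ0)
          _ = ((A ^ t) *ᵥ (δ • ws)) i := h4.symm
          _ ≤ _ := h3
    -- norm lower bound
    have hmap : ∀ t : ℕ, Mc ^ t = (B ^ t).map (algebraMap ℝ ℂ) := by
      intro t
      induction t with
      | zero => simp [Matrix.map_one]
      | succ t ih => rw [pow_succ, pow_succ, ih, hMc, Matrix.map_mul]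
    set W : ℝ := Finset.univ.sup' hune ws with hW
    have hWle : ∀ k, ws k ≤ W := fun k => Finset.le_sup' _ (Finset.mem_univ k)
    have hW0 : 0 < W := lt_of_lt_of_le (hwspos j0) (hWle j0)
    have hnormlb : ∀ t : ℕ, δ ^ t * ws j0 ≤ (n * ‖Mc ^ t‖) * W := by
      intro t
      have hBt : ∀ k, (A ^ t) j0 k ≤ ‖Mc ^ t‖ := by
        intro k
        have h1 : (A ^ t) j0 k = (B ^ t) k j0 := by
          rw [hA, ← Matrix.transpose_pow, Matrix.transpose_apply]
        have h2 : (B ^ t) k j0 = ‖(Mc ^ t) k j0‖ := by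
          rw [hmap t]
          show (B ^ t) k j0 = ‖(algebraMap ℝ ℂ) ((B ^ t) k j0)‖
          rw [show (algebraMap ℝ ℂ) ((B ^ t) k j0) = (((B ^ t) k j0 : ℝ) : ℂ) from rfl,
            Complex.norm_real, Real.norm_eq_abs, abs_of_nonneg (pow_entries_nonneg hBnonneg t k j0)]
        rw [h1, h2]
        exact entry_le_norm _ _ _
      calc δ ^ t * ws j0 ≤ ((A ^ t) *ᵥ ws) j0 := hpowδ t j0
        _ = ∑ k, (A ^ t) j0 k * ws k := rfl
        _ ≤ ∑ k, ‖Mc ^ t‖ * W := by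
            refine Finset.sum_le_sum fun k _ => ?_
            exact mul_le_mul (hBt k) (hWle k) (le_of_lt (hwspos k))
              (le_trans (norm_nonneg _) (entry_le_norm (Mc ^ t) k k))
        _ = (n * ‖Mc ^ t‖) * W := by
            rw [Finset.sum_const, Finset.card_univ, Fintype.card_fin, nsmul_eq_mul]
            ring
    -- spectral radius bound
    have hub : spectralRadius ℂ Mc ≤ 1 := by
      rw [spectralRadius]
      refine iSup₂_le fun μ' hμ' => ?_
      have h1 : ‖μ'‖ ∈ S := ⟨μ', hμ', rfl⟩
      have h2 : ‖μ'‖ ≤ 1 := by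
        have := le_csSup hSbdd h1
        rwa [show sSup S = 1 from hρ] at this
      have h3 : ‖μ'‖₊ ≤ 1 := by
        rw [← NNReal.coe_le_coe]
        exact_mod_cast h2
      exact_mod_cast ENNReal.coe_le_one_iff.mpr h3
    -- Gelfand formula contradiction
    set δ' : ℝ := (1 + δ) / 2 with hδ'
    have hδ'1 : 1 < δ' := by rw [hδ']; linarith
    have hδ'δ : δ' < δ := by rw [hδ']; linarith
    have hgelf := spectrum.pow_norm_pow_one_div_tendsto_nhds_spectralRadius Mc
    have hlt : spectralRadius ℂ Mc < ENNReal.ofReal δ' :=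
      lt_of_le_of_lt hub (by
        rw [← ENNReal.ofReal_one]
        exact (ENNReal.ofReal_lt_ofReal_iff (by linarith)).mpr hδ'1)
    have hev1 : ∀ᶠ t : ℕ in atTop,
        ENNReal.ofReal (‖Mc ^ t‖ ^ (1 / (t:ℝ))) < ENNReal.ofReal δ' :=
      hgelf.eventually_lt_const hlt
    set c : ℝ := ws j0 / (n * W) with hc
    have hc0 : 0 < c := div_pos (hwspos j0) (mul_pos (by exact_mod_cast hn) hW0)
    have hr01 : 0 ≤ δ' / δ ∧ δ' / δ < 1 :=
      ⟨le_of_lt (div_pos (by linarith) hδ0), (div_lt_one hδ0).mpr hδ'δ⟩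
    have hev2 : ∀ᶠ t : ℕ in atTop, (δ' / δ) ^ t < c :=
      (tendsto_pow_atTop_nhds_zero_of_lt_one hr01.1 hr01.2).eventually_lt_const hc0
    obtain ⟨t, ht1, ht2, ht3⟩ := ((hev1.and (hev2.and (eventually_ge_atTop 1))).exists)
    -- convert hev1 bound to ‖Mc ^ t‖ < δ' ^ t
    have htR : (0:ℝ) < (t:ℝ) := by exact_mod_cast ht3
    have hx0 : (0:ℝ) ≤ ‖Mc ^ t‖ := norm_nonneg _
    have h5 : ‖Mc ^ t‖ ^ (1 / (t:ℝ)) < δ' := by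
      have := ht1
      rwa [ENNReal.ofReal_lt_ofReal_iff (by linarith)] at this
    have h6 : ‖Mc ^ t‖ < δ' ^ t := by
      have h7 : (‖Mc ^ t‖ ^ (1 / (t:ℝ))) ^ (t:ℝ) < δ' ^ (t:ℝ) :=
        Real.rpow_lt_rpow (Real.rpow_nonneg hx0 _) h5 htR
      rwa [← Real.rpow_mul hx0, one_div_mul_cancel (ne_of_gt htR), Real.rpow_one,
        Real.rpow_natCast] at h7
    -- combine with lower bound
    have h8 := hnormlb t
    have h9 : c * δ ^ t ≤ ‖Mc ^ t‖ := by
      rw [hc]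
      rw [div_mul_eq_mul_div, div_le_iff₀ (mul_pos (by exact_mod_cast hn : (0:ℝ) < n) hW0)]
      calc ws j0 * δ ^ t = δ ^ t * ws j0 := by ring
        _ ≤ (n * ‖Mc ^ t‖) * W := h8
        _ = ‖Mc ^ t‖ * (n * W) := by ring
    have h10 : c * δ ^ t < δ' ^ t := lt_of_le_of_lt h9 h6
    have h11 : c < (δ' / δ) ^ t := by
      rw [div_pow]
      rw [lt_div_iff₀ (pow_pos hδ0 t)]
      linarith
    linarith

end Perron

lemma concaveOn_finset_sum {E : Type*} [NormedAddCommGroup E] [NormedSpace ℝ E]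
    {ι : Type*} [DecidableEq ι] (s : Finset ι) (g : ι → E → ℝ)
    (h : ∀ i ∈ s, ConcaveOn ℝ Set.univ (g i)) :
    ConcaveOn ℝ Set.univ (fun y => ∑ i ∈ s, g i y) := by
  induction s using Finset.induction_on with
  | empty => simpa using concaveOn_const (0:ℝ) convex_univ
  | @insert a s ha ih =>
    have h1 := h a (Finset.mem_insert_self a s)
    have h2 := ih fun i hi => h i (Finset.mem_insert_of_mem hi)
    have := h1.add h2
    refine this.congr fun y _ => ?_
    simp [Finset.sum_insert ha]

theorem stmt_13 (n : ℕ) (u : Fin n → (Fin n → ℝ) → ℝ)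
    (hdiff : ∀ i, Differentiable ℝ (u i))
    (hconc : ∀ i, StrictConcaveOn ℝ Set.univ (u i))
    (x : Fin n → ℝ)
    (hown : ∀ i, fderiv ℝ (u i) x (Pi.single i 1) = -1)
    (B : Matrix (Fin n) (Fin n) ℝ)
    (hB : ∀ i j, B i j = if i = j then 0 else fderiv ℝ (u i) x (Pi.single j 1))
    (hBnonneg : ∀ i j, 0 ≤ B i j)
    (hirr : MatIrreducible B)
    (hρ : specRad B = 1) :
    (∃ θ : Fin n → ℝ, (∀ i, 0 < θ i) ∧
      ∀ y : Fin n → ℝ, ∑ i, θ i * u i y ≤ ∑ i, θ i * u i x) ∧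
    ¬∃ y : Fin n → ℝ, (∀ i, u i x ≤ u i y) ∧ ∃ j, u j x < u j y := by
  classical
  obtain ⟨θ, hθpos, hθeq⟩ := perron B hBnonneg hirr hρ
  set f : (Fin n → ℝ) → ℝ := fun y => ∑ i, θ i * u i y with hf
  have hconcf : ConcaveOn ℝ Set.univ f := by
    refine concaveOn_finset_sum Finset.univ (fun i y => θ i * u i y) fun i _ => ?_
    have := ((hconc i).concaveOn).smul (le_of_lt (hθpos i))
    simpa [smul_eq_mul] using this
  have hder : HasFDerivAt f (∑ i, θ i • fderiv ℝ (u i) x) x := by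
    exact HasFDerivAt.fun_sum (fun i _ => ((hdiff i x).hasFDerivAt.const_mul (θ i)))
  have hDij : ∀ j, ∑ i, θ i * (fderiv ℝ (u i) x (Pi.single j 1)) = 0 := by
    intro j
    have hsplit : ∀ i, fderiv ℝ (u i) x (Pi.single j 1)
        = B i j - (if i = j then 1 else 0) := by
      intro i
      by_cases h : i = j
      · subst h
        rw [hown i, hB i i]
        simp
      · rw [hB i j, if_neg h, if_neg h]
        ring
    calc ∑ i, θ i * (fderiv ℝ (u i) x (Pi.single j 1))
        = ∑ i, (θ i * B i j - θ i * (if i = j then 1 else 0)) := by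
          refine Finset.sum_congr rfl fun i _ => ?_
          rw [hsplit i]; ring
      _ = (∑ i, θ i * B i j) - ∑ i, θ i * (if i = j then 1 else 0) :=
          Finset.sum_sub_distrib _ _
      _ = θ j - θ j := by
          rw [hθeq j]
          congr 1
          simp [mul_ite]
      _ = 0 := sub_self _
  have hφ0 : (∑ i, θ i • fderiv ℝ (u i) x) = 0 := by
    refine ContinuousLinearMap.ext fun v => ?_
    have hv : v = ∑ j, v j • (Pi.single j 1 : Fin n → ℝ) := by
      funext k
      simp [Finset.sum_apply, Pi.single_apply]
    calc (∑ i, θ i • fderiv ℝ (u i) x) v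
        = ∑ i, θ i * (fderiv ℝ (u i) x v) := by
          simp [ContinuousLinearMap.sum_apply, smul_eq_mul]
      _ = ∑ i, θ i * (∑ j, v j * (fderiv ℝ (u i) x (Pi.single j 1))) := by
          refine Finset.sum_congr rfl fun i _ => ?_
          congr 1
          conv_lhs => rw [hv]
          rw [map_sum]
          refine Finset.sum_congr rfl fun j _ => ?_
          rw [ContinuousLinearMap.map_smul, smul_eq_mul]
      _ = ∑ j, v j * (∑ i, θ i * (fderiv ℝ (u i) x (Pi.single j 1))) := by
          simp_rw [Finset.mul_sum]
          rw [Finset.sum_comm]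
          refine Finset.sum_congr rfl fun j _ => ?_
          refine Finset.sum_congr rfl fun i _ => by ring
      _ = 0 := by
          refine Finset.sum_eq_zero fun j _ => ?_
          rw [hDij j, mul_zero]
  have hfd : fderiv ℝ f x = 0 := by rw [hder.fderiv, hφ0]
  have hmax : ∀ y, f y ≤ f x := fun y =>
    concave_max_of_fderiv_zero hconcf hder.differentiableAt hfd y
  refine ⟨⟨θ, hθpos, hmax⟩, ?_⟩
  rintro ⟨y, hy, j, hj⟩
  have h1 : f x < f y :=
    Finset.sum_lt_sum (fun i _ => mul_le_mul_of_nonneg_left (hy i) (le_of_lt (hθpos i)))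
      ⟨j, Finset.mem_univ j, mul_lt_mul_of_pos_left hj (hθpos j)⟩
  exact absurd (hmax y) (not_le.mpr h1)
end

section
/- For any nonnegative n×n matrix M, ρ(M) = limsup_{t→∞} (trace(M^t))^{1/t}. -/
open Matrix Filter Topology

/-- Simultaneous recurrence of rotations on the torus: for any finite collection of angles,
there are arbitrarily large times `t` at which all `exp (t θ j I)` are close to `1`. -/
lemma aux_recur {ι : Type*} [Fintype ι] (θ : ι → ℝ) {δ : ℝ} (hδ : 0 < δ) (N : ℕ) :
    ∃ t : ℕ, N ≤ t ∧ ∀ j, ‖Complex.exp ((t * θ j : ℝ) * Complex.I) - 1‖ < δ := by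
  classical
  set u : ℕ → ι → ℂ := fun t j => Complex.exp ((t * θ j : ℝ) * Complex.I) with hu
  have hball : ∀ t, u t ∈ Metric.closedBall (0 : ι → ℂ) 1 := by
    intro t
    rw [Metric.mem_closedBall, dist_zero_right]
    refine (pi_norm_le_iff_of_nonneg zero_le_one).2 fun j => ?_
    simp only [hu]
    rw [Complex.norm_exp_ofReal_mul_I]
  obtain ⟨a, -, φ, hφ, hconv⟩ := tendsto_subseq_of_bounded Metric.isBounded_closedBall hball
  have hcauchy := hconv.cauchySeq
  rw [Metric.cauchySeq_iff] at hcauchy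
  obtain ⟨K, hK⟩ := hcauchy δ hδ
  have hmono : ∀ b : ℕ, φ K + b ≤ φ (K + b) := by
    intro b
    induction b with
    | zero => simp
    | succ b ih =>
      have h2 := hφ (show K + b < K + (b + 1) by omega)
      omega
  have hle : φ K ≤ φ (K + N) := le_trans (by omega) (hmono N)
  refine ⟨φ (K + N) - φ K, by have := hmono N; omega, fun j => ?_⟩
  have hdist : dist (u (φ (K + N))) (u (φ K)) < δ := hK (K + N) (by omega) K (by omega)
  have hj : dist (u (φ (K + N)) j) (u (φ K) j) < δ :=
    lt_of_le_of_lt (dist_le_pi_dist _ _ j) hdist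
  set t := φ (K + N) - φ K with ht
  have hsum : (t : ℂ) + (φ K : ℂ) = (φ (K + N) : ℂ) := by
    have h3 : t + φ K = φ (K + N) := Nat.sub_add_cancel hle
    exact_mod_cast congrArg (Nat.cast : ℕ → ℂ) h3
  have hexp : Complex.exp ((t * θ j : ℝ) * Complex.I) * Complex.exp ((φ K * θ j : ℝ) * Complex.I)
      = Complex.exp ((φ (K + N) * θ j : ℝ) * Complex.I) := by
    rw [← Complex.exp_add]
    congr 1
    push_cast
    rw [← hsum]
    ring
  calc ‖Complex.exp ((t * θ j : ℝ) * Complex.I) - 1‖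
      = ‖(Complex.exp ((t * θ j : ℝ) * Complex.I) - 1)
          * Complex.exp ((φ K * θ j : ℝ) * Complex.I)‖ := by
        rw [norm_mul, Complex.norm_exp_ofReal_mul_I, mul_one]
    _ = dist (u (φ (K + N)) j) (u (φ K) j) := by
        rw [sub_mul, one_mul, hexp, Complex.dist_eq, hu]
    _ < δ := hj

/-- Trace of the `t`-th power of an endomorphism which is `μ + nilpotent`. -/
lemma aux_trace_pow {W : Type*} [AddCommGroup W] [Module ℂ W] [FiniteDimensional ℂ W]
    (g : Module.End ℂ W) (μ : ℂ)
    (h : IsNilpotent (g - algebraMap ℂ (Module.End ℂ W) μ)) (t : ℕ) :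
    LinearMap.trace ℂ W (g ^ t) = (Module.finrank ℂ W : ℂ) * μ ^ t := by
  set a := algebraMap ℂ (Module.End ℂ W) μ with ha
  have hc : Commute g a := (Algebra.commutes μ g).symm
  have hga : Commute g (g - a) := (Commute.refl g).sub_right hc
  have haa : Commute a (g - a) := hc.symm.sub_right (Commute.refl a)
  have hnil : IsNilpotent (g ^ t - a ^ t) := by
    rw [← hc.geom_sum₂_mul t]
    refine Commute.isNilpotent_mul_left ?_ h
    exact Commute.sum_left _ _ _ fun i _ => (hga.pow_left i).mul_left (haa.pow_left _)
  have h0 : LinearMap.trace ℂ W (g ^ t - a ^ t) = 0 :=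
    (LinearMap.isNilpotent_trace_of_isNilpotent hnil).eq_zero
  rw [map_sub] at h0
  have h1 : LinearMap.trace ℂ W (g ^ t) = LinearMap.trace ℂ W (a ^ t) := by linear_combination h0
  rw [h1, ha, ← map_pow, Algebra.algebraMap_eq_smul_one, _root_.map_smul, LinearMap.trace_one,
    smul_eq_mul, mul_comm]

/-- Spectral decomposition of traces of powers: there is a finite set `S` (the spectrum) and
positive multiplicities `d` such that `trace (A ^ t) = ∑ μ ∈ S, d μ * μ ^ t`. -/
lemma aux_decomp (n : ℕ) (A : Matrix (Fin n) (Fin n) ℂ) :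
    ∃ (S : Finset ℂ) (d : ℂ → ℕ),
      ((S : Set ℂ) = spectrum ℂ A) ∧ (∀ μ ∈ S, 1 ≤ d μ) ∧
      ∀ t : ℕ, (A ^ t).trace = ∑ μ ∈ S, (d μ : ℂ) * μ ^ t := by
  classical
  set f : Module.End ℂ (Fin n → ℂ) := Matrix.toLinAlgEquiv' A with hf
  have hind := Module.End.independent_maxGenEigenspace f
  have htop := Module.End.iSup_maxGenEigenspace_eq_top f
  have hInt := DirectSum.isInternal_submodule_of_iSupIndep_of_iSup_eq_top hind htop
  have hfin : {μ : ℂ | f.maxGenEigenspace μ ≠ ⊥}.Finite :=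
    WellFoundedGT.finite_ne_bot_of_iSupIndep hind
  refine ⟨hfin.toFinset, fun μ => Module.finrank ℂ (f.maxGenEigenspace μ), ?_, ?_, ?_⟩
  · ext μ
    simp only [Set.Finite.coe_toFinset, Set.mem_setOf_eq]
    rw [← AlgEquiv.spectrum_eq (Matrix.toLinAlgEquiv' :
        Matrix (Fin n) (Fin n) ℂ ≃ₐ[ℂ] _) A, ← hf,
      ← Module.End.hasUnifEigenvalue_iff_mem_spectrum,
      ← Module.End.hasUnifEigenvalue_iff_hasUnifEigenvalue_one (k := ⊤) (by norm_num)]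
    rfl
  · intro μ hμ
    rw [Set.Finite.mem_toFinset] at hμ
    have : Nontrivial (f.maxGenEigenspace μ) := Submodule.nontrivial_iff_ne_bot.mpr hμ
    exact Module.finrank_pos
  · intro t
    have hmaps : ∀ μ : ℂ,
        Set.MapsTo (f ^ t) (f.maxGenEigenspace μ) (f.maxGenEigenspace μ) :=
      fun μ => Module.End.mapsTo_maxGenEigenspace_of_comm ((Commute.refl f).pow_right t) μ
    have htr1 : (A ^ t).trace = LinearMap.trace ℂ (Fin n → ℂ) (f ^ t) := by
      rw [hf, ← map_pow, LinearMap.trace_eq_matrix_trace ℂ (Pi.basisFun ℂ (Fin n)),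
        LinearMap.toMatrix_eq_toMatrix']
      congr 1
      exact (LinearMap.toMatrixAlgEquiv'_toLinAlgEquiv' (A ^ t)).symm
    rw [htr1, LinearMap.trace_eq_sum_trace_restrict' hInt hfin hmaps]
    refine Finset.sum_congr rfl fun μ hμ => ?_
    have hm1 : ∀ x ∈ f.maxGenEigenspace μ, f x ∈ f.maxGenEigenspace μ :=
      Module.End.mapsTo_maxGenEigenspace_of_comm (Commute.refl f) μ
    have hrestr : (f ^ t).restrict (hmaps μ) = (f.restrict hm1) ^ t :=
      (Module.End.pow_restrict t hm1).symm
    rw [hrestr]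
    have hA' : Set.MapsTo (algebraMap ℂ (Module.End ℂ (Fin n → ℂ)) μ)
        (f.maxGenEigenspace μ : Set (Fin n → ℂ)) (f.maxGenEigenspace μ) := fun x hx => by
      simpa [Module.algebraMap_end_apply] using
        Submodule.smul_mem (f.maxGenEigenspace μ) μ hx
    have hAW : (algebraMap ℂ (Module.End ℂ (Fin n → ℂ)) μ).restrict hA'
        = algebraMap ℂ (Module.End ℂ (f.maxGenEigenspace μ)) μ := by
      ext x
      simp [LinearMap.restrict_coe_apply, Module.algebraMap_end_apply]
      rfl
    have key : IsNilpotent (f.restrict hm1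
        - algebraMap ℂ (Module.End ℂ (f.maxGenEigenspace μ)) μ) := by
      rw [← hAW, LinearMap.restrict_sub hm1 hA']
      exact f.isNilpotent_restrict_maxGenEigenspace_sub_algebraMap μ
    rw [aux_trace_pow _ μ key t, mul_comm]

theorem stmt_16 (n : ℕ) (M : Matrix (Fin n) (Fin n) ℝ)
    (hnonneg : ∀ i j, 0 ≤ M i j) :
    specRad M = Filter.limsup (fun t : ℕ => ((M ^ t).trace) ^ ((t : ℝ)⁻¹)) atTop := by
  classical
  unfold specRad
  set A : Matrix (Fin n) (Fin n) ℂ := M.map (algebraMap ℝ ℂ) with hA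
  set u : ℕ → ℝ := fun t => ((M ^ t).trace) ^ ((t : ℝ)⁻¹) with hu
  have hent : ∀ (t : ℕ) (i j : Fin n), 0 ≤ (M ^ t) i j := by
    intro t
    induction t with
    | zero =>
      intro i j
      rw [pow_zero]
      by_cases h : i = j <;> simp [Matrix.one_apply, h]
    | succ t ih =>
      intro i j
      rw [pow_succ, Matrix.mul_apply]
      exact Finset.sum_nonneg fun k _ => mul_nonneg (ih i k) (hnonneg k j)
  have htrpos : ∀ t : ℕ, 0 ≤ (M ^ t).trace := fun t =>
    Finset.sum_nonneg fun i _ => hent t i i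
  have hupos : ∀ t, 0 ≤ u t := fun t => Real.rpow_nonneg (htrpos t) _
  have hAtr : ∀ t : ℕ, (A ^ t).trace = (((M ^ t).trace : ℝ) : ℂ) := by
    intro t
    have h1 : A ^ t = (M ^ t).map (algebraMap ℝ ℂ) := by
      rw [hA, ← RingHom.mapMatrix_apply, ← RingHom.mapMatrix_apply, ← map_pow]
    rw [h1]
    simp only [Matrix.trace, Matrix.diag, Matrix.map_apply]
    push_cast
    rfl
  rcases Nat.eq_zero_or_pos n with hn | hn
  · subst hn
    have hspec : {r : ℝ | ∃ μ : ℂ, μ ∈ spectrum ℂ A ∧ r = ‖μ‖} = ∅ := by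
      haveI : Subsingleton (Matrix (Fin 0) (Fin 0) ℂ) :=
        ⟨fun a b => by ext i j; exact i.elim0⟩
      ext r
      simp only [Set.mem_setOf_eq, Set.mem_empty_iff_false, iff_false, not_exists]
      rintro μ ⟨hμ, -⟩
      exact (spectrum.mem_iff.mp hμ) (isUnit_of_subsingleton _)
    rw [hspec, Real.sSup_empty]
    have hz : ∀ᶠ t : ℕ in atTop, u t = 0 := by
      filter_upwards [eventually_ge_atTop 1] with t ht
      have h2 : (M ^ t).trace = 0 := by
        simp [Matrix.trace]
      rw [hu]
      simp only [h2]
      rw [Real.zero_rpow (inv_ne_zero (Nat.cast_ne_zero.mpr (by omega)))]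
    rw [Filter.limsup_congr hz, Filter.limsup_const]
  · haveI : Nonempty (Fin n) := ⟨⟨0, hn⟩⟩
    obtain ⟨S, d, hspec, hd1, htr⟩ := aux_decomp n A
    have hSne : S.Nonempty := by
      obtain ⟨μ, hμ⟩ := Module.End.exists_eigenvalue (Matrix.toLinAlgEquiv' A)
      have h2 : μ ∈ spectrum ℂ A := by
        rw [← AlgEquiv.spectrum_eq (Matrix.toLinAlgEquiv' :
            Matrix (Fin n) (Fin n) ℂ ≃ₐ[ℂ] _) A]
        exact Module.End.hasEigenvalue_iff_mem_spectrum.mp hμ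
      exact ⟨μ, by rw [← Finset.mem_coe, hspec]; exact h2⟩
    set ρ := S.sup' hSne (fun μ => ‖μ‖) with hρ
    obtain ⟨μ₀, hμ₀S, hμ₀⟩ := Finset.exists_mem_eq_sup' hSne (fun μ => ‖μ‖)
    have hρle : ∀ μ ∈ S, ‖μ‖ ≤ ρ := fun μ hμ => Finset.le_sup' _ hμ
    have hρ0 : 0 ≤ ρ := le_trans (norm_nonneg μ₀) (hρle μ₀ hμ₀S)
    have hlhs : sSup {r : ℝ | ∃ μ : ℂ, μ ∈ spectrum ℂ A ∧ r = ‖μ‖} = ρ := by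
      rw [hρ, Finset.sup'_eq_csSup_image]
      congr 1
      ext r
      simp only [Set.mem_setOf_eq, Set.mem_image, Finset.mem_coe, ← hspec]
      constructor
      · rintro ⟨μ, hμ, rfl⟩
        exact ⟨μ, hμ, rfl⟩
      · rintro ⟨μ, hμ, rfl⟩
        exact ⟨μ, hμ, rfl⟩
    rw [hlhs]
    set C : ℝ := ∑ μ ∈ S, (d μ : ℝ) with hC
    have hC1 : 1 ≤ C := by
      calc (1 : ℝ) ≤ (d μ₀ : ℝ) := by exact_mod_cast hd1 μ₀ hμ₀S
      _ ≤ C := Finset.single_le_sum (f := fun μ => (d μ : ℝ)) (fun μ _ => by positivity) hμ₀S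
    have hC0 : (0:ℝ) < C := by linarith
    have hub : ∀ t : ℕ, (M ^ t).trace ≤ C * ρ ^ t := by
      intro t
      have h1 : ((M ^ t).trace : ℝ) ≤ ‖(A ^ t).trace‖ := by
        rw [hAtr t, Complex.norm_real, Real.norm_eq_abs]
        exact le_abs_self _
      have h2 : ‖(A ^ t).trace‖ ≤ ∑ μ ∈ S, (d μ : ℝ) * ρ ^ t := by
        rw [htr t]
        refine le_trans (norm_sum_le _ _) (Finset.sum_le_sum fun μ hμ => ?_)
        rw [norm_mul, norm_pow, Complex.norm_natCast]
        exact mul_le_mul_of_nonneg_left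
          (pow_le_pow_left₀ (norm_nonneg μ) (hρle μ hμ) t) (Nat.cast_nonneg _)
      rw [← Finset.sum_mul] at h2
      linarith
    have hubu : ∀ᶠ t : ℕ in atTop, u t ≤ C ^ ((t:ℝ)⁻¹) * ρ := by
      filter_upwards [eventually_ge_atTop 1] with t ht
      have htne : ((t:ℝ)) ≠ 0 := Nat.cast_ne_zero.mpr (by omega)
      calc u t ≤ (C * ρ ^ t) ^ ((t:ℝ)⁻¹) :=
            Real.rpow_le_rpow (htrpos t) (hub t) (by positivity)
      _ = C ^ ((t:ℝ)⁻¹) * (ρ ^ t) ^ ((t:ℝ)⁻¹) := Real.mul_rpow (by positivity) (by positivity)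
      _ = C ^ ((t:ℝ)⁻¹) * ρ := by
          rw [← Real.rpow_natCast ρ t, ← Real.rpow_mul hρ0, mul_inv_cancel₀ htne,
            Real.rpow_one]
    have hv : Tendsto (fun t : ℕ => C ^ ((t:ℝ)⁻¹) * ρ) atTop (𝓝 ρ) := by
      have h1 : Tendsto (fun t : ℕ => C ^ ((t:ℝ)⁻¹)) atTop (𝓝 1) := by
        have h2 := (tendsto_const_nhds (x := C) (f := atTop (α := ℕ))).rpow
          tendsto_inv_atTop_nhds_zero_nat (Or.inl (ne_of_gt hC0))
        simpa using h2
      have h3 := h1.mul_const ρ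
      simpa using h3
    have hbdd : Filter.IsBoundedUnder (· ≤ ·) atTop u :=
      hv.isBoundedUnder_le.mono_le hubu
    have hcob : Filter.IsCoboundedUnder (· ≤ ·) atTop u := by
      have hbb : Filter.IsBoundedUnder (· ≥ ·) atTop u :=
        ⟨0, Filter.eventually_map.mpr (Filter.Eventually.of_forall fun t => hupos t)⟩
      exact hbb.isCoboundedUnder_flip
    have hle1 : Filter.limsup u atTop ≤ ρ := by
      rw [← hv.limsup_eq]
      exact Filter.limsup_le_limsup hubu hcob hv.isBoundedUnder_le
    have hge1 : ρ ≤ Filter.limsup u atTop := by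
      rcases eq_or_lt_of_le hρ0 with hρz | hρpos
      · rw [← hρz]
        exact Filter.le_limsup_of_frequently_le
          (Filter.Frequently.of_forall fun t => hupos t) hbdd
      · refine le_of_forall_sub_le fun ε hε => ?_
        refine Filter.le_limsup_of_frequently_le ?_ hbdd
        rw [Filter.frequently_atTop]
        intro N₀
        set J := S.filter (fun μ => ‖μ‖ = ρ) with hJ
        have hJS : J ⊆ S := Finset.filter_subset _ _
        have hμ₀J : μ₀ ∈ J := Finset.mem_filter.mpr ⟨hμ₀S, (hρ.trans hμ₀).symm⟩
        set DJ : ℝ := ∑ μ ∈ J, (d μ : ℝ) with hDJ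
        have hDJ1 : 1 ≤ DJ := by
          calc (1:ℝ) ≤ (d μ₀ : ℝ) := by exact_mod_cast hd1 μ₀ hμ₀S
          _ ≤ DJ := by
            rw [hDJ]
            exact Finset.single_le_sum (f := fun μ => (d μ : ℝ))
              (fun μ _ => by positivity) hμ₀J
        have hDJC : DJ ≤ C := by
          rw [hDJ, hC]
          exact Finset.sum_le_sum_of_subset_of_nonneg hJS (fun μ _ _ => by positivity)
        set δ : ℝ := 1 / (4 * C) with hδdef
        have hδ : 0 < δ := by rw [hδdef]; positivity
        have htails : Tendsto (fun t : ℕ => ∑ μ ∈ S \ J, (d μ : ℝ) * (‖μ‖ / ρ) ^ t)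
            atTop (𝓝 0) := by
          have h4 : ∀ μ ∈ S \ J,
              Tendsto (fun t : ℕ => (d μ : ℝ) * (‖μ‖ / ρ) ^ t) atTop (𝓝 0) := by
            intro μ hμ
            rw [Finset.mem_sdiff] at hμ
            have hlt : ‖μ‖ < ρ :=
              lt_of_le_of_ne (hρle μ hμ.1)
                (fun h => hμ.2 (Finset.mem_filter.mpr ⟨hμ.1, h⟩))
            have h5 : ‖μ‖ / ρ < 1 := (div_lt_one hρpos).mpr hlt
            have h6 := tendsto_pow_atTop_nhds_zero_of_lt_one (by positivity) h5
            simpa using h6.const_mul ((d μ : ℝ))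
          have h7 := tendsto_finset_sum (S \ J) h4
          simpa using h7
        obtain ⟨T₁, hT₁⟩ := (Filter.eventually_atTop).mp
          (htails.eventually_lt_const (by norm_num : (0:ℝ) < 1/4))
        have hhalf : Tendsto (fun t : ℕ => ρ * (1/2 : ℝ) ^ ((t:ℝ)⁻¹)) atTop (𝓝 ρ) := by
          have h8 : Tendsto (fun t : ℕ => ((1:ℝ)/2) ^ ((t:ℝ)⁻¹)) atTop (𝓝 1) := by
            have h9 := (tendsto_const_nhds (x := (1:ℝ)/2) (f := atTop (α := ℕ))).rpow
              tendsto_inv_atTop_nhds_zero_nat (Or.inl (by norm_num))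
            simpa using h9
          have h10 := h8.const_mul ρ
          simpa [mul_comm] using h10
        obtain ⟨T₂, hT₂⟩ := (Filter.eventually_atTop).mp
          (hhalf.eventually_const_lt (by linarith : ρ - ε < ρ))
        obtain ⟨t, htN, hclose⟩ := aux_recur (fun μ : {x // x ∈ J} => (μ : ℂ).arg) hδ
          (max (max N₀ 1) (max T₁ T₂))
        have ht1 : 1 ≤ t := le_trans (le_trans (le_max_right _ _) (le_max_left _ _)) htN
        have htT₁ : T₁ ≤ t := le_trans (le_trans (le_max_left _ _) (le_max_right _ _)) htN
        have htT₂ : T₂ ≤ t := le_trans (le_trans (le_max_right _ _) (le_max_right _ _)) htN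
        have htN₀ : N₀ ≤ t := le_trans (le_trans (le_max_left _ _) (le_max_left _ _)) htN
        have hρt : (0:ℝ) < ρ ^ t := by positivity
        have hper : ∀ μ ∈ J, ‖(d μ : ℂ) * (μ ^ t - (ρ:ℂ) ^ t)‖
            ≤ (d μ : ℝ) * (ρ ^ t * δ) := by
          intro μ hμ
          rw [norm_mul, Complex.norm_natCast]
          refine mul_le_mul_of_nonneg_left ?_ (Nat.cast_nonneg _)
          have hμJ := Finset.mem_filter.mp hμ
          have hpow : μ ^ t = (ρ:ℂ) ^ t * Complex.exp ((t * μ.arg : ℝ) * Complex.I) := by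
            conv_lhs => rw [← Complex.norm_mul_exp_arg_mul_I μ]
            rw [hμJ.2, mul_pow, ← Complex.exp_nat_mul]
            congr 2
            push_cast
            ring
          have heq : μ ^ t - (ρ:ℂ) ^ t
              = (ρ:ℂ) ^ t * (Complex.exp ((t * μ.arg : ℝ) * Complex.I) - 1) := by
            rw [hpow]; ring
          rw [heq, norm_mul, norm_pow, Complex.norm_real, Real.norm_eq_abs, abs_of_nonneg hρ0]
          exact mul_le_mul_of_nonneg_left (le_of_lt (hclose ⟨μ, hμ⟩)) (by positivity)
        have htail : ∑ μ ∈ S \ J, ‖(d μ : ℂ) * μ ^ t‖ ≤ ρ ^ t * (1/4) := by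
          have h11 : ∀ μ ∈ S \ J, ‖(d μ : ℂ) * μ ^ t‖
              = ρ ^ t * ((d μ : ℝ) * (‖μ‖ / ρ) ^ t) := by
            intro μ hμ
            rw [norm_mul, norm_pow, Complex.norm_natCast, div_pow]
            field_simp
          rw [Finset.sum_congr rfl h11, ← Finset.mul_sum]
          exact mul_le_mul_of_nonneg_left (le_of_lt (hT₁ t htT₁)) (le_of_lt hρt)
        have hDJc : ((DJ : ℝ) : ℂ) = ∑ μ ∈ J, (d μ : ℂ) := by
          rw [hDJ]
          push_cast
          rfl
        have hsplit : (((M ^ t).trace : ℝ) : ℂ) - (ρ:ℂ) ^ t * ((DJ : ℝ) : ℂ)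
            = (∑ μ ∈ J, (d μ : ℂ) * (μ ^ t - (ρ:ℂ) ^ t)) + ∑ μ ∈ S \ J, (d μ : ℂ) * μ ^ t := by
          have hc2 : (ρ:ℂ) ^ t * ((DJ : ℝ) : ℂ) = ∑ μ ∈ J, (d μ : ℂ) * (ρ:ℂ) ^ t := by
            rw [hDJc, Finset.mul_sum]
            exact Finset.sum_congr rfl fun μ _ => by ring
          have h3 : ∑ μ ∈ J, (d μ : ℂ) * (μ ^ t - (ρ:ℂ) ^ t)
              = (∑ μ ∈ J, (d μ : ℂ) * μ ^ t) - ∑ μ ∈ J, (d μ : ℂ) * (ρ:ℂ) ^ t := by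
            rw [← Finset.sum_sub_distrib]
            exact Finset.sum_congr rfl fun μ _ => by ring
          rw [← hAtr t, htr t, hc2, ← Finset.sum_sdiff hJS, h3]
          ring
        have habs : |((M ^ t).trace : ℝ) - ρ ^ t * DJ| ≤ ρ ^ t * (1/2) := by
          have h12 : ‖(((M ^ t).trace : ℝ) : ℂ) - (ρ:ℂ) ^ t * ((DJ:ℝ):ℂ)‖
              ≤ ρ ^ t * (1/2) := by
            rw [hsplit]
            refine le_trans (norm_add_le _ _) ?_
            have h13 : ‖∑ μ ∈ J, (d μ : ℂ) * (μ ^ t - (ρ:ℂ) ^ t)‖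
                ≤ ρ ^ t * (1/4) := by
              refine le_trans (norm_sum_le _ _)
                (le_trans (Finset.sum_le_sum hper) ?_)
              rw [← Finset.sum_mul]
              calc DJ * (ρ ^ t * δ) ≤ C * (ρ ^ t * δ) :=
                    mul_le_mul_of_nonneg_right hDJC (by positivity)
              _ = ρ ^ t * (1/4) := by
                  rw [hδdef]
                  field_simp
            have h14 := le_trans
              (norm_sum_le (S \ J) fun μ => (d μ : ℂ) * μ ^ t) htail
            linarith
          rw [show (((M ^ t).trace : ℝ) : ℂ) - (ρ:ℂ) ^ t * ((DJ:ℝ):ℂ)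
              = (((M ^ t).trace - ρ ^ t * DJ : ℝ) : ℂ) by push_cast; ring,
            Complex.norm_real, Real.norm_eq_abs] at h12
          exact h12
        have h15 := abs_le.mp habs
        have h16 : ρ ^ t * 1 ≤ ρ ^ t * DJ :=
          mul_le_mul_of_nonneg_left hDJ1 (le_of_lt hρt)
        have hkey : ρ ^ t * (1/2) ≤ (M ^ t).trace := by linarith [h15.1]
        refine ⟨t, htN₀, ?_⟩
        have htne : ((t:ℝ)) ≠ 0 := Nat.cast_ne_zero.mpr (by omega)
        have hut : ρ * (1/2 : ℝ) ^ ((t:ℝ)⁻¹) ≤ u t := by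
          have h17 : (ρ ^ t * (1/2 : ℝ)) ^ ((t:ℝ)⁻¹) ≤ u t :=
            Real.rpow_le_rpow (by positivity) hkey (by positivity)
          calc ρ * (1/2 : ℝ) ^ ((t:ℝ)⁻¹)
              = (ρ ^ t * (1/2 : ℝ)) ^ ((t:ℝ)⁻¹) := by
                rw [Real.mul_rpow (by positivity) (by norm_num), ← Real.rpow_natCast ρ t,
                  ← Real.rpow_mul hρ0, mul_inv_cancel₀ htne, Real.rpow_one]
          _ ≤ u t := h17
        have h18 := hT₂ t htT₂
        linarith
    linarith
end
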